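/- arXiv:1410.2531 — 2 statements merged into one kernel-verified Lean document; each statement's English description precedes it below -/
import Mathlib

section
/- Let (Ω, F, P) be a probability space, T > 0, and β₁ > 1, β₂ > 1 real constants. Let c₁, c₂, γ : Ω × [0,T] → ℝ be jointly measurable with c₁, c₂ ≥ 0 and γ > 0 pointwise, and set α₁(ω,t) = γ(ω,t) + β₁c₁(ω,t)² + β₂c₂(ω,t)² and p₁(ω,t) = exp(∫₀^t α₁(ω,s) ds), assumed finite for a.e. ω. Let f : Ω × [0,T] × ℝ^d × ℝ^{d×k} → ℝ^d be jointly measurable satisfying |f(ω,t,y₁,z₁) − f(ω,t,y₂,z₂)| ≤ c₁(ω,t)|y₁ − y₂| + c₂(ω,t)|z₁ − z₂| for all y₁, y₂ ∈ ℝ^d, z₁, z₂ ∈ ℝ^{d×k}, (ω,t)-a.e. Let φ : Ω × [0,T] → ℝ^d and ψ : Ω × [0,T] → ℝ^{d×k} be jointly measurable, and assume E∫₀^T p₁|φ|² dt, E∫₀^T p₁|ψ|² dt and E∫₀^T p₁|f(·,t,0,0)|²/α₁ dt are all finite. Then E[ |∫₀^T f(ω,s,φ(ω,s),ψ(ω,s))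 ds|² ] ≤ (3/β₁)·E∫₀^T p₁|φ|² ds + (3/β₂)·E∫₀^T p₁|ψ|² ds + 3·E∫₀^T p₁|f(·,s,0,0)|²/α₁ ds; in particular the left-hand side is finite. -/
open MeasureTheory ProbabilityTheory intervalIntegral
open Set Real Filter
open scoped ENNReal NNReal

lemma exp_tail (a : ℝ) :
    ∫⁻ u in Set.Ioi a, ENNReal.ofReal (Real.exp (-u)) = ENNReal.ofReal (Real.exp (-a)) := by
  rw [← ofReal_integral_eq_lintegral_ofReal]
  · rw [integral_exp_neg_Ioi]
  · have := exp_neg_integrableOn_Ioi a (zero_lt_one)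
    exact (by simpa using this : IntegrableOn (fun x : ℝ => Real.exp (-x)) (Set.Ioi a))
  · exact ae_of_all _ fun x => (Real.exp_pos _).le

lemma gamma_tail :
    ∫⁻ u : ℝ, ENNReal.ofReal (Real.exp (-u) * u) = 1 := by
  have hind : ∀ u : ℝ, ENNReal.ofReal (Real.exp (-u) * u)
      = (Set.Ioi (0:ℝ)).indicator (fun u => ENNReal.ofReal (Real.exp (-u) * u)) u := by
    intro u
    rcases le_or_gt u 0 with h | h
    · rw [Set.indicator_of_notMem (fun hx => absurd (Set.mem_Ioi.1 hx) (not_lt.2 h))]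
      exact ENNReal.ofReal_eq_zero.2 (mul_nonpos_of_nonneg_of_nonpos (Real.exp_pos _).le h)
    · rw [Set.indicator_of_mem (Set.mem_Ioi.2 h)]
  rw [lintegral_congr hind, lintegral_indicator measurableSet_Ioi _]
  have hint : IntegrableOn (fun x : ℝ => Real.exp (-x) * x) (Set.Ioi 0) := by
    have := Real.GammaIntegral_convergent (s := 2) (by norm_num)
    refine this.congr_fun (fun x hx => ?_) measurableSet_Ioi
    norm_num
  rw [← ofReal_integral_eq_lintegral_ofReal hint]
  · have hg := Real.Gamma_eq_integral (s := 2) (by norm_num)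
    have : (∫ x in Set.Ioi (0:ℝ), Real.exp (-x) * x) = Real.Gamma 2 := by
      rw [hg]
      refine setIntegral_congr_fun measurableSet_Ioi (fun x hx => ?_)
      norm_num
    rw [this]
    have : Real.Gamma 2 = 1 := by
      have h1 : Real.Gamma 2 = Real.Gamma (1 + 1) := by norm_num
      rw [h1, Real.Gamma_add_one (by norm_num), Real.Gamma_one, mul_one]
    rw [this, ENNReal.ofReal_one]
  · exact (ae_restrict_iff' measurableSet_Ioi).2 (ae_of_all _ fun x hx =>
      mul_nonneg (Real.exp_pos _).le (le_of_lt hx))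

lemma ftc_bound (T : ℝ) (hT : 0 ≤ T) (α : ℝ → ℝ) (hm : Measurable α)
    (hnn : ∀ t, 0 ≤ α t) (hint : IntegrableOn α (Set.Icc 0 T)) :
    ∫⁻ t in Set.Icc 0 T, ENNReal.ofReal (α t / Real.exp (∫ s in (0:ℝ)..t, α s)) ≤ 1 := by
  classical
  set ν : Measure ℝ := volume.withDensity (fun s => ENNReal.ofReal (α s)) with hνdef
  have hν : ∀ s : Set ℝ, MeasurableSet s → ν s = ∫⁻ t in s, ENNReal.ofReal (α t) :=
    fun s hs => withDensity_apply _ hs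
  have hνac : ν ≪ volume := withDensity_absolutelyContinuous _ _
  set B : ℝ → ℝ≥0∞ := fun t => ν (Set.Ioc 0 t) with hBdef
  have hBmono : Monotone B := fun a b hab => measure_mono (Set.Ioc_subset_Ioc le_rfl hab)
  have hBmeas : Measurable B := hBmono.measurable
  have hfin : ∫⁻ t in Set.Icc 0 T, ENNReal.ofReal (α t) < ⊤ := by
    have h1 : ∀ᵐ t ∂(volume.restrict (Set.Icc 0 T)),
        ENNReal.ofReal (α t) = ↑‖α t‖₊ := by
      refine ae_of_all _ fun t => ?_
      rw [← enorm_eq_nnnorm, ← ofReal_norm, Real.norm_of_nonneg (hnn t)]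
    rw [lintegral_congr_ae h1]
    exact hint.2
  have hBfin : ∀ t, t ∈ Set.Icc (0:ℝ) T → B t ≠ ⊤ := by
    intro t ht
    have : B t ≤ ∫⁻ u in Set.Icc 0 T, ENNReal.ofReal (α u) := by
      show ν (Set.Ioc 0 t) ≤ _
      rw [hν _ measurableSet_Ioc]
      exact lintegral_mono_set (fun x hx => ⟨le_of_lt hx.1, hx.2.trans ht.2⟩)
    exact (lt_of_le_of_lt this hfin).ne
  have hA : ∀ t, t ∈ Set.Icc (0:ℝ) T → (∫ s in (0:ℝ)..t, α s) = (B t).toReal := by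
    intro t ht
    rw [intervalIntegral.integral_of_le ht.1,
      integral_eq_lintegral_of_nonneg_ae (ae_of_all _ fun s => hnn s)
        hm.aestronglyMeasurable.restrict]
    show _ = (ν (Set.Ioc 0 t)).toReal
    rw [hν _ measurableSet_Ioc]
  -- rewrite integrand
  have hcong : ∫⁻ t in Set.Icc 0 T, ENNReal.ofReal (α t / Real.exp (∫ s in (0:ℝ)..t, α s))
      = ∫⁻ t in Set.Icc 0 T,
        ENNReal.ofReal (α t) * ENNReal.ofReal (Real.exp (-(B t).toReal)) := by
    refine setLIntegral_congr_fun measurableSet_Icc (fun t ht => ?_)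
    rw [hA t ht, div_eq_mul_inv, ← Real.exp_neg, ENNReal.ofReal_mul (hnn t)]
  rw [hcong]
  -- introduce double integral
  set F : ℝ → ℝ → ℝ≥0∞ := fun t u =>
    if (B t).toReal < u then ENNReal.ofReal (α t) * ENNReal.ofReal (Real.exp (-u)) else 0
    with hFdef
  have hFm : Measurable (Function.uncurry F) := by
    refine Measurable.ite ?_ ?_ measurable_const
    · exact measurableSet_lt (hBmeas.ennreal_toReal.comp measurable_fst) measurable_snd
    · exact ((ENNReal.measurable_ofReal.comp (hm.comp measurable_fst))).mul
        (ENNReal.measurable_ofReal.comp ((Real.measurable_exp.comp measurable_neg).comp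
          measurable_snd))
  have hstep : ∀ t, ENNReal.ofReal (α t) * ENNReal.ofReal (Real.exp (-(B t).toReal))
      = ∫⁻ u, F t u := by
    intro t
    have h1 : ∫⁻ u, F t u
        = ∫⁻ u, (Set.Ioi ((B t).toReal)).indicator
            (fun u => ENNReal.ofReal (α t) * ENNReal.ofReal (Real.exp (-u))) u := by
      refine lintegral_congr fun u => ?_
      by_cases h : (B t).toReal < u
      · rw [hFdef]; simp only [if_pos h]
        rw [Set.indicator_of_mem (Set.mem_Ioi.2 h)]
      · rw [hFdef]; simp only [if_neg h]
        rw [Set.indicator_of_notMem (fun hx => h (Set.mem_Ioi.1 hx))]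
    rw [h1, lintegral_indicator measurableSet_Ioi _,
      lintegral_const_mul' _ _ ENNReal.ofReal_ne_top, exp_tail]
  have hswap : ∫⁻ t in Set.Icc 0 T,
      ENNReal.ofReal (α t) * ENNReal.ofReal (Real.exp (-(B t).toReal))
      = ∫⁻ u, ∫⁻ t in Set.Icc 0 T, F t u := by
    calc ∫⁻ t in Set.Icc 0 T,
        ENNReal.ofReal (α t) * ENNReal.ofReal (Real.exp (-(B t).toReal))
        = ∫⁻ t in Set.Icc 0 T, ∫⁻ u, F t u := lintegral_congr fun t => hstep t
      _ = ∫⁻ u, ∫⁻ t in Set.Icc 0 T, F t u :=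
          lintegral_lintegral_swap hFm.aemeasurable
  rw [hswap]
  -- bound the inner integral for each u
  have hinner : ∀ u : ℝ, ∫⁻ t in Set.Icc 0 T, F t u
      ≤ ENNReal.ofReal (Real.exp (-u) * u) := by
    intro u
    set S : Set ℝ := {t | (B t).toReal < u} with hSdef
    have hSm : MeasurableSet S := measurableSet_lt hBmeas.ennreal_toReal measurable_const
    have h1 : ∫⁻ t in Set.Icc 0 T, F t u
        = (∫⁻ t in S ∩ Set.Icc 0 T, ENNReal.ofReal (α t))
            * ENNReal.ofReal (Real.exp (-u)) := by
      have : ∀ t, F t u = S.indicator (fun t => ENNReal.ofReal (α t)) t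
          * ENNReal.ofReal (Real.exp (-u)) := by
        intro t
        by_cases h : (B t).toReal < u
        · rw [hFdef]; simp only [if_pos h]
          rw [Set.indicator_of_mem (by exact h)]
        · rw [hFdef]; simp only [if_neg h]
          rw [Set.indicator_of_notMem (by exact h), zero_mul]
      simp_rw [this]
      rw [lintegral_mul_const' _ _ ENNReal.ofReal_ne_top,
        lintegral_indicator hSm _, Measure.restrict_restrict hSm]
    rw [h1]
    have hkey : ν (S ∩ Set.Icc 0 T) ≤ ENNReal.ofReal u := by
      rcases Set.eq_empty_or_nonempty (S ∩ Set.Icc 0 T) with he | hne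
      · rw [he, measure_empty]; exact zero_le
      · have hbdd : BddAbove (S ∩ Set.Icc 0 T) :=
          (bddAbove_Icc (a := (0:ℝ)) (b := T)).mono Set.inter_subset_right
        set τ := sSup (S ∩ Set.Icc 0 T) with hτdef
        have hτmem : τ ∈ Set.Icc (0:ℝ) T := by
          constructor
          · obtain ⟨x, hx⟩ := hne
            exact le_trans hx.2.1 (le_csSup hbdd hx)
          · exact csSup_le hne fun y hy => hy.2.2
        have hsub : S ∩ Set.Icc 0 T ⊆ Set.Icc 0 τ :=
          fun x hx => ⟨hx.2.1, le_csSup hbdd hx⟩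
        have hIccIoc : ν (Set.Icc 0 τ) ≤ ν (Set.Ioc 0 τ) := by
          have : Set.Icc (0:ℝ) τ ⊆ Set.Ioc 0 τ ∪ {0} := by
            intro x hx
            rcases eq_or_lt_of_le hx.1 with h | h
            · exact Or.inr (by simp [← h])
            · exact Or.inl ⟨h, hx.2⟩
          calc ν (Set.Icc 0 τ) ≤ ν (Set.Ioc 0 τ ∪ {0}) := measure_mono this
            _ ≤ ν (Set.Ioc 0 τ) + ν {0} := measure_union_le _ _
            _ = ν (Set.Ioc 0 τ) := by rw [hνac Real.volume_singleton, add_zero]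
        have hmain : ν (Set.Ioc 0 τ) ≤ ENNReal.ofReal u := by
          by_cases hτS : τ ∈ S ∩ Set.Icc 0 T
          · have hlt : (B τ).toReal < u := hτS.1
            have := (ENNReal.lt_ofReal_iff_toReal_lt (hBfin τ hτS.2)).2 hlt
            exact le_of_lt this
          · obtain ⟨w, hwmono, hwtend, hwmem⟩ := exists_seq_tendsto_sSup hne hbdd
            have hwlt : ∀ n, w n < τ := by
              intro n
              rcases lt_or_eq_of_le (le_csSup hbdd (hwmem n)) with h | h
              · exact h
              · refine absurd ?_ hτS
                rw [hτdef, ← h]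
                exact hwmem n
            have hcover : Set.Ioc 0 τ ⊆ (⋃ n, Set.Ioc 0 (w n)) ∪ {τ} := by
              intro x hx
              rcases eq_or_lt_of_le hx.2 with h | h
              · exact Or.inr (by simp [h])
              · obtain ⟨n, hn⟩ := (hwtend.eventually (eventually_gt_nhds h)).exists
                exact Or.inl (Set.mem_iUnion.2 ⟨n, ⟨hx.1, hn.le⟩⟩)
            have hUnion : ν (⋃ n, Set.Ioc 0 (w n)) = ⨆ n, ν (Set.Ioc 0 (w n)) :=
              Monotone.measure_iUnion
                (fun i j hij => Set.Ioc_subset_Ioc le_rfl (hwmono hij))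
            calc ν (Set.Ioc 0 τ) ≤ ν ((⋃ n, Set.Ioc 0 (w n)) ∪ {τ}) := measure_mono hcover
              _ ≤ ν (⋃ n, Set.Ioc 0 (w n)) + ν {τ} := measure_union_le _ _
              _ = ⨆ n, ν (Set.Ioc 0 (w n)) := by
                  rw [hνac Real.volume_singleton, add_zero, hUnion]
              _ ≤ ENNReal.ofReal u := by
                  refine iSup_le fun n => ?_
                  have hlt : (B (w n)).toReal < u := (hwmem n).1
                  exact le_of_lt ((ENNReal.lt_ofReal_iff_toReal_lt
                    (hBfin (w n) (hwmem n).2)).2 hlt)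
        exact le_trans (le_trans (measure_mono hsub) hIccIoc) hmain
    calc (∫⁻ t in S ∩ Set.Icc 0 T, ENNReal.ofReal (α t)) * ENNReal.ofReal (Real.exp (-u))
        = ν (S ∩ Set.Icc 0 T) * ENNReal.ofReal (Real.exp (-u)) := by
          rw [hν _ (hSm.inter measurableSet_Icc)]
      _ ≤ ENNReal.ofReal u * ENNReal.ofReal (Real.exp (-u)) :=
          mul_le_mul_left hkey _
      _ = ENNReal.ofReal (Real.exp (-u) * u) := by
          rw [← ENNReal.ofReal_mul' (Real.exp_pos _).le, mul_comm]
  calc ∫⁻ u, ∫⁻ t in Set.Icc 0 T, F t u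
      ≤ ∫⁻ u, ENNReal.ofReal (Real.exp (-u) * u) := lintegral_mono hinner
    _ = 1 := gamma_tail

lemma real_bound (β₁ β₂ cc₁ cc₂ pv a Φ Ψ N : ℝ) (hβ₁ : 1 < β₁) (hβ₂ : 1 < β₂)
    (hc₁ : 0 ≤ cc₁) (hc₂ : 0 ≤ cc₂) (ha : 0 < a) (hp : 0 < pv)
    (h1 : β₁ * cc₁ ^ 2 ≤ a) (h2 : β₂ * cc₂ ^ 2 ≤ a)
    (hΦ : 0 ≤ Φ) (hΨ : 0 ≤ Ψ) (hN : 0 ≤ N) :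
    pv / a * (cc₁ * Φ + cc₂ * Ψ + N) ^ 2
      ≤ 3 / β₁ * (pv * Φ ^ 2) + 3 / β₂ * (pv * Ψ ^ 2) + 3 * (pv * N ^ 2 / a) := by
  have hβ₁0 : (0:ℝ) < β₁ := by linarith
  have hβ₂0 : (0:ℝ) < β₂ := by linarith
  have e1 : 3 * (cc₁ ^ 2 * (pv * Φ ^ 2)) ≤ 3 / β₁ * (pv * Φ ^ 2) * a := by
    have h := mul_le_mul_of_nonneg_left h1
      (show 0 ≤ 3 / β₁ * (pv * Φ ^ 2) by positivity)
    calc 3 * (cc₁ ^ 2 * (pv * Φ ^ 2))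
        = 3 / β₁ * (pv * Φ ^ 2) * (β₁ * cc₁ ^ 2) := by field_simp
      _ ≤ 3 / β₁ * (pv * Φ ^ 2) * a := h
  have e2 : 3 * (cc₂ ^ 2 * (pv * Ψ ^ 2)) ≤ 3 / β₂ * (pv * Ψ ^ 2) * a := by
    have h := mul_le_mul_of_nonneg_left h2
      (show 0 ≤ 3 / β₂ * (pv * Ψ ^ 2) by positivity)
    calc 3 * (cc₂ ^ 2 * (pv * Ψ ^ 2))
        = 3 / β₂ * (pv * Ψ ^ 2) * (β₂ * cc₂ ^ 2) := by field_simp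
      _ ≤ 3 / β₂ * (pv * Ψ ^ 2) * a := h
  have key : pv * (cc₁ * Φ + cc₂ * Ψ + N) ^ 2
      ≤ (3 / β₁ * (pv * Φ ^ 2) + 3 / β₂ * (pv * Ψ ^ 2)) * a + 3 * (pv * N ^ 2) := by
    have quad : pv * (cc₁ * Φ + cc₂ * Ψ + N) ^ 2
        ≤ 3 * (cc₁ ^ 2 * (pv * Φ ^ 2)) + 3 * (cc₂ ^ 2 * (pv * Ψ ^ 2)) + 3 * (pv * N ^ 2) := by
      nlinarith [mul_nonneg hp.le (sq_nonneg (cc₁ * Φ - cc₂ * Ψ)),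
        mul_nonneg hp.le (sq_nonneg (cc₁ * Φ - N)),
        mul_nonneg hp.le (sq_nonneg (cc₂ * Ψ - N))]
    linarith
  have hformula : 3 / β₁ * (pv * Φ ^ 2) + 3 / β₂ * (pv * Ψ ^ 2) + 3 * (pv * N ^ 2 / a)
      = ((3 / β₁ * (pv * Φ ^ 2) + 3 / β₂ * (pv * Ψ ^ 2)) * a + 3 * (pv * N ^ 2)) / a := by
    field_simp
  rw [hformula, div_mul_eq_mul_div, div_le_div_iff_of_pos_right ha]
  exact key

lemma core_bound {E : Type*} [NormedAddCommGroup E] [NormedSpace ℝ E] (T : ℝ) (hT : 0 ≤ T)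
    (β₁ β₂ : ℝ) (hβ₁ : 1 < β₁) (hβ₂ : 1 < β₂)
    (c₁ c₂ α : ℝ → ℝ) (hc₁m : Measurable c₁) (hc₂m : Measurable c₂) (hαm : Measurable α)
    (hc₁ : ∀ t, 0 ≤ c₁ t) (hc₂ : ∀ t, 0 ≤ c₂ t) (hαpos : ∀ t, 0 < α t)
    (h1 : ∀ t, β₁ * c₁ t ^ 2 ≤ α t) (h2 : ∀ t, β₂ * c₂ t ^ 2 ≤ α t)
    (hαint : IntegrableOn α (Set.Icc 0 T))
    (F : ℝ → E) (Φ Ψ N : ℝ → ℝ)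
    (hΦm : Measurable Φ) (hΨm : Measurable Ψ) (hNm : Measurable N)
    (hΦ : ∀ t, 0 ≤ Φ t) (hΨ : ∀ t, 0 ≤ Ψ t) (hN : ∀ t, 0 ≤ N t)
    (hbound : ∀ᵐ t ∂(volume.restrict (Set.Icc (0:ℝ) T)),
      ‖F t‖ ≤ c₁ t * Φ t + c₂ t * Ψ t + N t) :
    ENNReal.ofReal (‖∫ s in (0:ℝ)..T, F s‖ ^ 2) ≤
      ∫⁻ t in Set.Icc (0:ℝ) T,
        (ENNReal.ofReal (3 / β₁ * (Real.exp (∫ s in (0:ℝ)..t, α s) * Φ t ^ 2)) +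
         ENNReal.ofReal (3 / β₂ * (Real.exp (∫ s in (0:ℝ)..t, α s) * Ψ t ^ 2)) +
         ENNReal.ofReal (3 * (Real.exp (∫ s in (0:ℝ)..t, α s) * N t ^ 2 / α t))) := by
  set p : ℝ → ℝ := fun t => Real.exp (∫ s in (0:ℝ)..t, α s) with hpdef
  have hp : ∀ t, 0 < p t := fun t => Real.exp_pos _
  have hpaem : AEMeasurable p (volume.restrict (Set.Icc (0:ℝ) T)) := by
    have hcont : ContinuousOn p (Set.Icc 0 T) := by
      have h0 : ContinuousOn (fun x => ∫ s in (0:ℝ)..x, α s) (Set.uIcc 0 T) :=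
        intervalIntegral.continuousOn_primitive_interval (by rwa [Set.uIcc_of_le hT])
      rw [Set.uIcc_of_le hT] at h0
      exact Real.continuous_exp.comp_continuousOn h0
    exact hcont.aemeasurable measurableSet_Icc
  set G : ℝ → ℝ := fun t => c₁ t * Φ t + c₂ t * Ψ t + N t with hGdef
  have hG : ∀ t, 0 ≤ G t := fun t =>
    add_nonneg (add_nonneg (mul_nonneg (hc₁ t) (hΦ t)) (mul_nonneg (hc₂ t) (hΨ t))) (hN t)
  set U : ℝ → ℝ≥0∞ := fun t => ENNReal.ofReal (Real.sqrt (α t / p t)) with hUdef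
  set V : ℝ → ℝ≥0∞ := fun t => ENNReal.ofReal (Real.sqrt (p t / α t) * G t) with hVdef
  have hUV : ∀ t, ENNReal.ofReal (G t) = U t * V t := by
    intro t
    rw [hUdef, hVdef, ← ENNReal.ofReal_mul (Real.sqrt_nonneg _)]
    congr 1
    rw [← mul_assoc, ← Real.sqrt_mul (div_nonneg (hαpos t).le (hp t).le)]
    have : α t / p t * (p t / α t) = 1 := by
      rw [div_mul_div_comm, mul_comm (α t) (p t)]
      exact div_self (mul_pos (hp t) (hαpos t)).ne'
    rw [this, Real.sqrt_one, one_mul]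
  -- step 1 : reduce to lintegral of the norm
  have e0 : ENNReal.ofReal (‖∫ s in (0:ℝ)..T, F s‖ ^ 2)
      = (‖∫ s in Set.Ioc (0:ℝ) T, F s‖₊ : ℝ≥0∞) ^ 2 := by
    rw [intervalIntegral.integral_of_le hT, ENNReal.ofReal_pow (norm_nonneg _),
      ofReal_norm, enorm_eq_nnnorm]
  have e1 : (‖∫ s in Set.Ioc (0:ℝ) T, F s‖₊ : ℝ≥0∞)
      ≤ ∫⁻ t in Set.Icc (0:ℝ) T, (‖F t‖₊ : ℝ≥0∞) :=
    le_trans (enorm_integral_le_lintegral_enorm _)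
      (lintegral_mono_set Set.Ioc_subset_Icc_self)
  have e2 : ∫⁻ t in Set.Icc (0:ℝ) T, (‖F t‖₊ : ℝ≥0∞)
      ≤ ∫⁻ t in Set.Icc (0:ℝ) T, U t * V t := by
    refine lintegral_mono_ae (hbound.mono fun t ht => ?_)
    rw [← hUV t, ← enorm_eq_nnnorm, ← ofReal_norm]
    exact ENNReal.ofReal_le_ofReal (le_trans ht (le_of_eq rfl))
  -- Hölder
  have conj : Real.HolderConjugate 2 2 := ⟨by norm_num, by norm_num, by norm_num⟩
  have hUm : AEMeasurable U (volume.restrict (Set.Icc (0:ℝ) T)) := by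
    exact ENNReal.measurable_ofReal.comp_aemeasurable
      ((Real.continuous_sqrt.measurable).comp_aemeasurable
        (hαm.aemeasurable.div hpaem))
  have hVm : AEMeasurable V (volume.restrict (Set.Icc (0:ℝ) T)) := by
    have hGm : Measurable G := ((hc₁m.mul hΦm).add (hc₂m.mul hΨm)).add hNm
    exact ENNReal.measurable_ofReal.comp_aemeasurable
      (((Real.continuous_sqrt.measurable).comp_aemeasurable
        (hpaem.div hαm.aemeasurable)).mul hGm.aemeasurable)
  have hHold := ENNReal.lintegral_mul_le_Lp_mul_Lq
    (volume.restrict (Set.Icc (0:ℝ) T)) conj hUm hVm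
  -- the two factors
  have hU2 : ∫⁻ t in Set.Icc (0:ℝ) T, U t ^ (2:ℝ) ≤ 1 := by
    have : ∀ t, U t ^ (2:ℝ) = ENNReal.ofReal (α t / p t) := by
      intro t
      rw [show ((2:ℝ)) = ((2:ℕ):ℝ) by norm_num, ENNReal.rpow_natCast, hUdef,
        ← ENNReal.ofReal_pow (Real.sqrt_nonneg _),
        Real.sq_sqrt (div_nonneg (hαpos t).le (hp t).le)]
    rw [lintegral_congr this]
    exact ftc_bound T hT α hαm (fun t => (hαpos t).le) hαint
  have hV2 : ∫⁻ t in Set.Icc (0:ℝ) T, V t ^ (2:ℝ)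
      ≤ ∫⁻ t in Set.Icc (0:ℝ) T,
        (ENNReal.ofReal (3 / β₁ * (p t * Φ t ^ 2)) +
         ENNReal.ofReal (3 / β₂ * (p t * Ψ t ^ 2)) +
         ENNReal.ofReal (3 * (p t * N t ^ 2 / α t))) := by
    refine lintegral_mono fun t => ?_
    have hv : V t ^ (2:ℝ) = ENNReal.ofReal (p t / α t * G t ^ 2) := by
      rw [show ((2:ℝ)) = ((2:ℕ):ℝ) by norm_num, ENNReal.rpow_natCast, hVdef,
        ← ENNReal.ofReal_pow (mul_nonneg (Real.sqrt_nonneg _) (hG t)), mul_pow,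
        Real.sq_sqrt (div_nonneg (hp t).le (hαpos t).le)]
    rw [hv]
    have hr := real_bound β₁ β₂ (c₁ t) (c₂ t) (p t) (α t) (Φ t) (Ψ t) (N t)
      hβ₁ hβ₂ (hc₁ t) (hc₂ t) (hαpos t) (hp t) (h1 t) (h2 t) (hΦ t) (hΨ t) (hN t)
    calc ENNReal.ofReal (p t / α t * G t ^ 2)
        ≤ ENNReal.ofReal (3 / β₁ * (p t * Φ t ^ 2) + 3 / β₂ * (p t * Ψ t ^ 2)
            + 3 * (p t * N t ^ 2 / α t)) := ENNReal.ofReal_le_ofReal hr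
      _ ≤ _ := by
          have hb₁ : (0:ℝ) ≤ 3 / β₁ := div_nonneg (by norm_num) (by linarith)
          have hb₂ : (0:ℝ) ≤ 3 / β₂ := div_nonneg (by norm_num) (by linarith)
          have t₁ : (0:ℝ) ≤ 3 / β₁ * (p t * Φ t ^ 2) :=
            mul_nonneg hb₁ (mul_nonneg (hp t).le (sq_nonneg _))
          have t₂ : (0:ℝ) ≤ 3 / β₂ * (p t * Ψ t ^ 2) :=
            mul_nonneg hb₂ (mul_nonneg (hp t).le (sq_nonneg _))
          rw [ENNReal.ofReal_add (add_nonneg t₁ t₂) (mul_nonneg (by norm_num)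
              (div_nonneg (mul_nonneg (hp t).le (sq_nonneg _)) (hαpos t).le)),
            ENNReal.ofReal_add t₁ t₂]
  -- combine
  calc ENNReal.ofReal (‖∫ s in (0:ℝ)..T, F s‖ ^ 2)
      = (‖∫ s in Set.Ioc (0:ℝ) T, F s‖₊ : ℝ≥0∞) ^ 2 := e0
    _ ≤ (∫⁻ t in Set.Icc (0:ℝ) T, U t * V t) ^ 2 :=
        pow_le_pow_left₀ (zero_le) (le_trans e1 e2) 2
    _ ≤ ((∫⁻ t in Set.Icc (0:ℝ) T, U t ^ (2:ℝ)) ^ (1/(2:ℝ))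
          * (∫⁻ t in Set.Icc (0:ℝ) T, V t ^ (2:ℝ)) ^ (1/(2:ℝ))) ^ 2 := by
        refine pow_le_pow_left₀ (zero_le) ?_ 2
        simpa using hHold
    _ = (∫⁻ t in Set.Icc (0:ℝ) T, U t ^ (2:ℝ))
          * (∫⁻ t in Set.Icc (0:ℝ) T, V t ^ (2:ℝ)) := by
        rw [mul_pow, ← ENNReal.rpow_natCast (_ ^ (1/(2:ℝ))) 2,
          ← ENNReal.rpow_natCast ((∫⁻ t in Set.Icc (0:ℝ) T, V t ^ (2:ℝ)) ^ (1/(2:ℝ))) 2,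
          ← ENNReal.rpow_mul, ← ENNReal.rpow_mul]
        norm_num
    _ ≤ 1 * (∫⁻ t in Set.Icc (0:ℝ) T, V t ^ (2:ℝ)) := mul_le_mul_left hU2 _
    _ = ∫⁻ t in Set.Icc (0:ℝ) T, V t ^ (2:ℝ) := one_mul _
    _ ≤ _ := hV2
/-- the a-priori estimate (3.3) of Lemma 3.1(i) under conditions A1:
E|∫₀ᵀ f(s,φ,ψ) ds|² ≤ (3/β₁) E∫₀ᵀ p₁|φ|² + (3/β₂) E∫₀ᵀ p₁|ψ|²
+ 3 E∫₀ᵀ p₁|f(·,0,0)|²/α₁, and in particular the left-hand side is finite. -/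
theorem stmt_4 {Ω : Type*} [MeasureSpace Ω] [IsProbabilityMeasure (ℙ : Measure Ω)]
    (T : ℝ) (hT : 0 < T) (d k : ℕ)
    (β₁ β₂ : ℝ) (hβ₁ : 1 < β₁) (hβ₂ : 1 < β₂)
    (c₁ c₂ γ : Ω → ℝ → ℝ)
    (hc₁m : Measurable (Function.uncurry c₁))
    (hc₂m : Measurable (Function.uncurry c₂))
    (hγm : Measurable (Function.uncurry γ))
    (hc₁ : ∀ ω t, 0 ≤ c₁ ω t) (hc₂ : ∀ ω t, 0 ≤ c₂ ω t) (hγ : ∀ ω t, 0 < γ ω t)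
    (α₁ p₁ : Ω → ℝ → ℝ)
    (hα₁ : α₁ = fun ω t => γ ω t + β₁ * c₁ ω t ^ 2 + β₂ * c₂ ω t ^ 2)
    (hp₁ : p₁ = fun ω t => Real.exp (∫ s in (0 : ℝ)..t, α₁ ω s))
    (hα₁int : ∀ᵐ ω ∂ℙ, IntegrableOn (α₁ ω) (Set.Icc 0 T))
    (f : Ω → ℝ → EuclideanSpace ℝ (Fin d) → EuclideanSpace ℝ (Fin d × Fin k) →
      EuclideanSpace ℝ (Fin d))
    (hfm : Measurable (fun q : Ω × ℝ × EuclideanSpace ℝ (Fin d) ×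
      EuclideanSpace ℝ (Fin d × Fin k) => f q.1 q.2.1 q.2.2.1 q.2.2.2))
    (hLip : ∀ᵐ q ∂((ℙ : Measure Ω).prod (volume.restrict (Set.Icc (0 : ℝ) T))),
      ∀ y₁ y₂ : EuclideanSpace ℝ (Fin d), ∀ z₁ z₂ : EuclideanSpace ℝ (Fin d × Fin k),
        ‖f q.1 q.2 y₁ z₁ - f q.1 q.2 y₂ z₂‖ ≤
          c₁ q.1 q.2 * ‖y₁ - y₂‖ + c₂ q.1 q.2 * ‖z₁ - z₂‖)
    (φ : Ω → ℝ → EuclideanSpace ℝ (Fin d))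
    (ψ : Ω → ℝ → EuclideanSpace ℝ (Fin d × Fin k))
    (hφm : Measurable (Function.uncurry φ)) (hψm : Measurable (Function.uncurry ψ))
    (hφint : (∫⁻ ω, ∫⁻ t in Set.Icc (0 : ℝ) T,
      ENNReal.ofReal (p₁ ω t * ‖φ ω t‖ ^ 2) ∂volume ∂ℙ) < ⊤)
    (hψint : (∫⁻ ω, ∫⁻ t in Set.Icc (0 : ℝ) T,
      ENNReal.ofReal (p₁ ω t * ‖ψ ω t‖ ^ 2) ∂volume ∂ℙ) < ⊤)
    (hfint : (∫⁻ ω, ∫⁻ t in Set.Icc (0 : ℝ) T,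
      ENNReal.ofReal (p₁ ω t * ‖f ω t 0 0‖ ^ 2 / α₁ ω t) ∂volume ∂ℙ) < ⊤) :
    (∫⁻ ω, ENNReal.ofReal (‖∫ s in (0 : ℝ)..T, f ω s (φ ω s) (ψ ω s)‖ ^ 2) ∂ℙ) ≤
        ENNReal.ofReal (3 / β₁) * (∫⁻ ω, ∫⁻ t in Set.Icc (0 : ℝ) T,
          ENNReal.ofReal (p₁ ω t * ‖φ ω t‖ ^ 2) ∂volume ∂ℙ) +
        ENNReal.ofReal (3 / β₂) * (∫⁻ ω, ∫⁻ t in Set.Icc (0 : ℝ) T,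
          ENNReal.ofReal (p₁ ω t * ‖ψ ω t‖ ^ 2) ∂volume ∂ℙ) +
        3 * (∫⁻ ω, ∫⁻ t in Set.Icc (0 : ℝ) T,
          ENNReal.ofReal (p₁ ω t * ‖f ω t 0 0‖ ^ 2 / α₁ ω t) ∂volume ∂ℙ) ∧
    (∫⁻ ω, ENNReal.ofReal (‖∫ s in (0 : ℝ)..T, f ω s (φ ω s) (ψ ω s)‖ ^ 2) ∂ℙ) < ⊤ := by
  classical
  classical
  simp only [hp₁] at hφint hψint hfint ⊢
  -- basic facts about α₁
  have hαm : Measurable (Function.uncurry α₁) := by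
    rw [hα₁]
    exact (hγm.add ((hc₁m.pow_const 2).const_mul β₁)).add ((hc₂m.pow_const 2).const_mul β₂)
  have hαmω : ∀ ω, Measurable (α₁ ω) := fun ω => hαm.comp (measurable_prodMk_left)
  have hαpos : ∀ ω t, 0 < α₁ ω t := by
    intro ω t; rw [hα₁]
    have h0 := hγ ω t
    have h1 : 0 ≤ β₁ * c₁ ω t ^ 2 := mul_nonneg (by linarith) (sq_nonneg _)
    have h2 : 0 ≤ β₂ * c₂ ω t ^ 2 := mul_nonneg (by linarith) (sq_nonneg _)
    dsimp only
    linarith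
  have hb1 : ∀ ω t, β₁ * c₁ ω t ^ 2 ≤ α₁ ω t := by
    intro ω t; rw [hα₁]
    have h0 := hγ ω t
    have h2 : 0 ≤ β₂ * c₂ ω t ^ 2 := mul_nonneg (by linarith) (sq_nonneg _)
    dsimp only
    linarith
  have hb2 : ∀ ω t, β₂ * c₂ ω t ^ 2 ≤ α₁ ω t := by
    intro ω t; rw [hα₁]
    have h0 := hγ ω t
    have h1 : 0 ≤ β₁ * c₁ ω t ^ 2 := mul_nonneg (by linarith) (sq_nonneg _)
    dsimp only
    linarith
  -- measurable version of exp of the primitive of α₁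
  set Bfun : Ω × ℝ → ℝ≥0∞ :=
    fun q => ∫⁻ s in Set.Ioc (0:ℝ) q.2, ENNReal.ofReal (α₁ q.1 s) with hBfun
  have hBm : Measurable Bfun := by
    set W : (Ω × ℝ) × ℝ → ℝ≥0∞ := fun p =>
      if 0 < p.2 ∧ p.2 ≤ p.1.2 then ENNReal.ofReal (α₁ p.1.1 p.2) else 0 with hW
    have hWm : Measurable W := by
      refine Measurable.ite ?_ ?_ measurable_const
      · exact ((measurableSet_lt measurable_const measurable_snd).inter
          (measurableSet_le measurable_snd measurable_fst.snd))
      · exact ENNReal.measurable_ofReal.comp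
          (hαm.comp (measurable_fst.fst.prodMk measurable_snd))
    have heq : Bfun = fun q : Ω × ℝ => ∫⁻ s, W (q, s) := by
      funext q
      show (∫⁻ s in Set.Ioc (0:ℝ) q.2, ENNReal.ofReal (α₁ q.1 s)) = _
      rw [← lintegral_indicator measurableSet_Ioc]
      refine lintegral_congr fun s => ?_
      rw [Set.indicator_apply, hW]
      simp [Set.mem_Ioc]
    rw [heq]
    exact hWm.lintegral_prod_right'
  set pQ : Ω × ℝ → ℝ := fun q => Real.exp ((Bfun q).toReal) with hpQ
  have hpQm : Measurable pQ := Real.measurable_exp.comp hBm.ennreal_toReal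
  have hpeq : ∀ ω, IntegrableOn (α₁ ω) (Set.Icc 0 T) → ∀ t ∈ Set.Icc (0:ℝ) T,
      Real.exp (∫ s in (0:ℝ)..t, α₁ ω s) = pQ (ω, t) := by
    intro ω hint t ht
    rw [hpQ]
    congr 1
    rw [intervalIntegral.integral_of_le ht.1,
      integral_eq_lintegral_of_nonneg_ae (ae_of_all _ fun s => (hαpos ω s).le)
        (hαmω ω).aestronglyMeasurable.restrict]
  -- measurable versions of the three inner integrals
  set M₁ : Ω → ℝ≥0∞ := fun ω => ∫⁻ t in Set.Icc (0:ℝ) T,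
    ENNReal.ofReal (pQ (ω, t) * ‖φ ω t‖ ^ 2) with hM₁
  set M₂ : Ω → ℝ≥0∞ := fun ω => ∫⁻ t in Set.Icc (0:ℝ) T,
    ENNReal.ofReal (pQ (ω, t) * ‖ψ ω t‖ ^ 2) with hM₂
  set M₃ : Ω → ℝ≥0∞ := fun ω => ∫⁻ t in Set.Icc (0:ℝ) T,
    ENNReal.ofReal (pQ (ω, t) * ‖f ω t 0 0‖ ^ 2 / α₁ ω t) with hM₃
  have hM₁m : Measurable M₁ := by
    refine Measurable.lintegral_prod_right'
      (f := fun q : Ω × ℝ => ENNReal.ofReal (pQ q * ‖φ q.1 q.2‖ ^ 2)) ?_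
    exact ENNReal.measurable_ofReal.comp (hpQm.mul (hφm.norm.pow_const 2))
  have hM₂m : Measurable M₂ := by
    refine Measurable.lintegral_prod_right'
      (f := fun q : Ω × ℝ => ENNReal.ofReal (pQ q * ‖ψ q.1 q.2‖ ^ 2)) ?_
    exact ENNReal.measurable_ofReal.comp (hpQm.mul (hψm.norm.pow_const 2))
  have hf00m : Measurable (fun q : Ω × ℝ => f q.1 q.2 0 0) := by
    exact hfm.comp (measurable_fst.prodMk (measurable_snd.prodMk
      (measurable_const.prodMk measurable_const)))
  have hM₃m : Measurable M₃ := by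
    refine Measurable.lintegral_prod_right'
      (f := fun q : Ω × ℝ => ENNReal.ofReal (pQ q * ‖f q.1 q.2 0 0‖ ^ 2 / α₁ q.1 q.2)) ?_
    exact ENNReal.measurable_ofReal.comp ((hpQm.mul (hf00m.norm.pow_const 2)).div hαm)
  -- the three inner integrals, as they appear in the statement
  set H₁ : Ω → ℝ≥0∞ := fun ω => ∫⁻ t in Set.Icc (0:ℝ) T,
    ENNReal.ofReal (Real.exp (∫ s in (0:ℝ)..t, α₁ ω s) * ‖φ ω t‖ ^ 2) with hH₁
  set H₂ : Ω → ℝ≥0∞ := fun ω => ∫⁻ t in Set.Icc (0:ℝ) T,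
    ENNReal.ofReal (Real.exp (∫ s in (0:ℝ)..t, α₁ ω s) * ‖ψ ω t‖ ^ 2) with hH₂
  set H₃ : Ω → ℝ≥0∞ := fun ω => ∫⁻ t in Set.Icc (0:ℝ) T,
    ENNReal.ofReal (Real.exp (∫ s in (0:ℝ)..t, α₁ ω s) * ‖f ω t 0 0‖ ^ 2 / α₁ ω t) with hH₃
  have hH₁ae : ∀ᵐ ω ∂ℙ, H₁ ω = M₁ ω := by
    filter_upwards [hα₁int] with ω hint
    exact setLIntegral_congr_fun measurableSet_Icc (fun t ht => by
      rw [hpeq ω hint t ht])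
  have hH₂ae : ∀ᵐ ω ∂ℙ, H₂ ω = M₂ ω := by
    filter_upwards [hα₁int] with ω hint
    exact setLIntegral_congr_fun measurableSet_Icc (fun t ht => by
      rw [hpeq ω hint t ht])
  have hH₃ae : ∀ᵐ ω ∂ℙ, H₃ ω = M₃ ω := by
    filter_upwards [hα₁int] with ω hint
    exact setLIntegral_congr_fun measurableSet_Icc (fun t ht => by
      rw [hpeq ω hint t ht])
  have aeH₁ : AEMeasurable H₁ ℙ := hM₁m.aemeasurable.congr (hH₁ae.mono fun ω h => h.symm)
  have aeH₂ : AEMeasurable H₂ ℙ := hM₂m.aemeasurable.congr (hH₂ae.mono fun ω h => h.symm)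
  have aeH₃ : AEMeasurable H₃ ℙ := hM₃m.aemeasurable.congr (hH₃ae.mono fun ω h => h.symm)
  have hβ₁0 : (0:ℝ) ≤ 3 / β₁ := div_nonneg (by norm_num) (by linarith)
  have hβ₂0 : (0:ℝ) ≤ 3 / β₂ := div_nonneg (by norm_num) (by linarith)
  -- pointwise estimate
  have hmain : ∀ᵐ ω ∂ℙ,
      ENNReal.ofReal (‖∫ s in (0 : ℝ)..T, f ω s (φ ω s) (ψ ω s)‖ ^ 2) ≤
        ENNReal.ofReal (3 / β₁) * H₁ ω + ENNReal.ofReal (3 / β₂) * H₂ ω + 3 * H₃ ω := by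
    filter_upwards [hα₁int, Measure.ae_ae_of_ae_prod hLip] with ω hint hlip
    have hbound : ∀ᵐ t ∂(volume.restrict (Set.Icc (0:ℝ) T)),
        ‖f ω t (φ ω t) (ψ ω t)‖ ≤ c₁ ω t * ‖φ ω t‖ + c₂ ω t * ‖ψ ω t‖ + ‖f ω t 0 0‖ := by
      filter_upwards [hlip] with t hlt
      have h := hlt (φ ω t) 0 (ψ ω t) 0
      rw [sub_zero, sub_zero] at h
      calc ‖f ω t (φ ω t) (ψ ω t)‖
          = ‖(f ω t (φ ω t) (ψ ω t) - f ω t 0 0) + f ω t 0 0‖ := by rw [sub_add_cancel]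
        _ ≤ ‖f ω t (φ ω t) (ψ ω t) - f ω t 0 0‖ + ‖f ω t 0 0‖ := norm_add_le _ _
        _ ≤ c₁ ω t * ‖φ ω t‖ + c₂ ω t * ‖ψ ω t‖ + ‖f ω t 0 0‖ := by linarith
    have hcore : ENNReal.ofReal (‖∫ s in (0 : ℝ)..T, f ω s (φ ω s) (ψ ω s)‖ ^ 2) ≤
        ∫⁻ t in Set.Icc (0:ℝ) T,
          (ENNReal.ofReal (3 / β₁ * (Real.exp (∫ s in (0:ℝ)..t, α₁ ω s) * ‖φ ω t‖ ^ 2)) +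
           ENNReal.ofReal (3 / β₂ * (Real.exp (∫ s in (0:ℝ)..t, α₁ ω s) * ‖ψ ω t‖ ^ 2)) +
           ENNReal.ofReal (3 * (Real.exp (∫ s in (0:ℝ)..t, α₁ ω s) * ‖f ω t 0 0‖ ^ 2
              / α₁ ω t))) :=
      core_bound T hT.le β₁ β₂ hβ₁ hβ₂ (c₁ ω) (c₂ ω) (α₁ ω)
        (hc₁m.comp measurable_prodMk_left) (hc₂m.comp measurable_prodMk_left) (hαmω ω)
        (hc₁ ω) (hc₂ ω) (hαpos ω) (hb1 ω) (hb2 ω) hint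
        (fun t => f ω t (φ ω t) (ψ ω t))
        (fun t => ‖φ ω t‖) (fun t => ‖ψ ω t‖) (fun t => ‖f ω t 0 0‖)
        ((hφm.comp measurable_prodMk_left).norm) ((hψm.comp measurable_prodMk_left).norm)
        ((hf00m.comp measurable_prodMk_left).norm)
        (fun t => norm_nonneg _) (fun t => norm_nonneg _) (fun t => norm_nonneg _) hbound
    refine le_trans hcore (le_of_eq ?_)
    -- split the integral of the sum
    have hpaem : AEMeasurable (fun t => Real.exp (∫ s in (0:ℝ)..t, α₁ ω s))
        (volume.restrict (Set.Icc (0:ℝ) T)) := by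
      have hcont : ContinuousOn (fun x => Real.exp (∫ s in (0:ℝ)..x, α₁ ω s))
          (Set.Icc 0 T) := by
        have h0 : ContinuousOn (fun x => ∫ s in (0:ℝ)..x, α₁ ω s) (Set.uIcc 0 T) :=
          intervalIntegral.continuousOn_primitive_interval (by rwa [Set.uIcc_of_le hT.le])
        rw [Set.uIcc_of_le hT.le] at h0
        exact Real.continuous_exp.comp_continuousOn h0
      exact hcont.aemeasurable measurableSet_Icc
    have hx₁ : AEMeasurable (fun t => ENNReal.ofReal
        (3 / β₁ * (Real.exp (∫ s in (0:ℝ)..t, α₁ ω s) * ‖φ ω t‖ ^ 2)))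
        (volume.restrict (Set.Icc (0:ℝ) T)) :=
      ENNReal.measurable_ofReal.comp_aemeasurable ((hpaem.mul
        (((hφm.comp measurable_prodMk_left).norm.pow_const 2).aemeasurable)).const_mul _)
    have hx₂ : AEMeasurable (fun t => ENNReal.ofReal
        (3 / β₂ * (Real.exp (∫ s in (0:ℝ)..t, α₁ ω s) * ‖ψ ω t‖ ^ 2)))
        (volume.restrict (Set.Icc (0:ℝ) T)) :=
      ENNReal.measurable_ofReal.comp_aemeasurable ((hpaem.mul
        (((hψm.comp measurable_prodMk_left).norm.pow_const 2).aemeasurable)).const_mul _)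
    rw [lintegral_add_left' (hx₁.fun_add hx₂), lintegral_add_left' hx₁]
    have e₁ : ∫⁻ t in Set.Icc (0:ℝ) T, ENNReal.ofReal
        (3 / β₁ * (Real.exp (∫ s in (0:ℝ)..t, α₁ ω s) * ‖φ ω t‖ ^ 2))
        = ENNReal.ofReal (3 / β₁) * H₁ ω := by
      rw [hH₁, ← lintegral_const_mul' _ _ ENNReal.ofReal_ne_top]
      exact lintegral_congr fun t => (ENNReal.ofReal_mul hβ₁0)
    have e₂ : ∫⁻ t in Set.Icc (0:ℝ) T, ENNReal.ofReal
        (3 / β₂ * (Real.exp (∫ s in (0:ℝ)..t, α₁ ω s) * ‖ψ ω t‖ ^ 2))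
        = ENNReal.ofReal (3 / β₂) * H₂ ω := by
      rw [hH₂, ← lintegral_const_mul' _ _ ENNReal.ofReal_ne_top]
      exact lintegral_congr fun t => (ENNReal.ofReal_mul hβ₂0)
    have e₃ : ∫⁻ t in Set.Icc (0:ℝ) T, ENNReal.ofReal
        (3 * (Real.exp (∫ s in (0:ℝ)..t, α₁ ω s) * ‖f ω t 0 0‖ ^ 2 / α₁ ω t))
        = 3 * H₃ ω := by
      rw [hH₃, ← lintegral_const_mul' _ _ (by norm_num : (3:ℝ≥0∞) ≠ ⊤)]
      refine lintegral_congr fun t => ?_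
      rw [ENNReal.ofReal_mul (by norm_num : (0:ℝ) ≤ 3)]
      norm_num
    rw [e₁, e₂, e₃]
  -- put everything together
  have key : (∫⁻ ω, ENNReal.ofReal (‖∫ s in (0 : ℝ)..T, f ω s (φ ω s) (ψ ω s)‖ ^ 2) ∂ℙ) ≤
      ENNReal.ofReal (3 / β₁) * (∫⁻ ω, H₁ ω ∂ℙ) +
      ENNReal.ofReal (3 / β₂) * (∫⁻ ω, H₂ ω ∂ℙ) + 3 * (∫⁻ ω, H₃ ω ∂ℙ) := by
    refine le_trans (lintegral_mono_ae hmain) (le_of_eq ?_)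
    rw [lintegral_add_left' ((aeH₁.const_mul _).fun_add (aeH₂.const_mul _)),
      lintegral_add_left' (aeH₁.const_mul _),
      lintegral_const_mul'' _ aeH₁, lintegral_const_mul'' _ aeH₂,
      lintegral_const_mul'' _ aeH₃]
  refine ⟨key, lt_of_le_of_lt key ?_⟩
  refine ENNReal.add_lt_top.2 ⟨ENNReal.add_lt_top.2 ⟨?_, ?_⟩, ?_⟩
  · exact ENNReal.mul_lt_top ENNReal.ofReal_lt_top hφint
  · exact ENNReal.mul_lt_top ENNReal.ofReal_lt_top hψint
  · exact ENNReal.mul_lt_top (by norm_num) hfint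
end

section
/- Let (Ω, F, P) be a probability space, T > 0, and real constants β̄₁ > 4 and β̄₂ > 90β̄₁²/(β̄₁² − 16). Let c₁, c₂, γ̄ : Ω × [0,T] → ℝ be jointly measurable with c₁, c₂ ≥ 0 and γ̄ > 0 pointwise, and set α₂(ω,t) = γ̄(ω,t) + β̄₁c₁(ω,t) + β̄₂c₂(ω,t)² and p₂(ω,t) = exp(∫₀^t α₂(ω,s) ds), assumed finite for a.e. ω. Let f : Ω × [0,T] × ℝ^d × ℝ^{d×k} → ℝ^d be jointly measurable satisfying |f(ω,t,y₁,z₁) − f(ω,t,y₂,z₂)| ≤ c₁(ω,t)|y₁ − y₂| + c₂(ω,t)|z₁ − z₂| for all y₁, y₂ ∈ ℝ^d, z₁, z₂ ∈ ℝ^{d×k}, (ω,t)-a.e. Let φ : Ω × [0,T] → ℝ^d and ψ : Ω × [0,T] → ℝ^{d×k} be jointly measurable, and assume E∫₀^T p₂ α₂ |φ|² dt, E∫₀^T p₂|ψ|² dt and E∫₀^T p₂|f(·,t,0,0)|²/α₂ dt are all finite. Then E[ |∫₀^T f(ω,s,φ(ω,s),ψ(ω,s)) ds|² ] ≤ (3/β̄₁²)·E∫₀^T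 p₂ α₂ |φ|² ds + (3/β̄₂)·E∫₀^T p₂|ψ|² ds + 3·E∫₀^T p₂|f(·,s,0,0)|²/α₂ ds; in particular the left-hand side is finite. -/
open MeasureTheory ProbabilityTheory intervalIntegral
open Real Set Filter


lemma key_exp_bound {T : ℝ} (hT : 0 ≤ T) {α : ℝ → ℝ}
    (hm : Measurable α) (hnn : ∀ t, 0 ≤ α t)
    (hint : IntegrableOn α (Set.Icc 0 T)) :
    ∫⁻ t in Set.Icc 0 T,
      ENNReal.ofReal (α t * Real.exp (-(∫ s in (0:ℝ)..t, α s))) ≤ 1 := by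
  set A : ℝ → ℝ := fun t => ∫ s in (0:ℝ)..t, α s with hA
  have hAcont : ContinuousOn A (Set.Icc 0 T) := by
    have := continuousOn_primitive_interval (a := 0) (b := T) (μ := volume) (f := α)
      (by rwa [Set.uIcc_of_le hT])
    rwa [Set.uIcc_of_le hT] at this
  have hii : ∀ u v : ℝ, 0 ≤ u → u ≤ v → v ≤ T → IntervalIntegrable α volume u v := by
    intro u v hu h hv
    rw [intervalIntegrable_iff_integrableOn_Ioc_of_le h]
    exact hint.mono_set (fun y hy => ⟨le_trans hu (le_of_lt hy.1), le_trans hy.2 hv⟩)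
  have hAmono : ∀ s t : ℝ, 0 ≤ s → s ≤ t → t ≤ T → A s ≤ A t := by
    intro s t hs hst htT
    have h1 : A s + ∫ u in s..t, α u = A t :=
      integral_add_adjacent_intervals (hii 0 s le_rfl hs (le_trans hst htT)) (hii s t hs hst htT)
    have h2 : 0 ≤ ∫ u in s..t, α u :=
      intervalIntegral.integral_nonneg hst (fun u _ => hnn u)
    linarith
  have hA0 : A 0 = 0 := intervalIntegral.integral_same
  have hAnn : ∀ t ∈ Set.Icc (0:ℝ) T, 0 ≤ A t := by
    intro t ht
    have := hAmono 0 t le_rfl ht.1 ht.2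
    linarith
  -- exp(-a) as an integral over Ioi a
  have hexp : ∀ a : ℝ, ENNReal.ofReal (Real.exp (-a))
      = ∫⁻ x in Set.Ioi a, ENNReal.ofReal (Real.exp (-x)) := by
    intro a
    have hi : IntegrableOn (fun x => Real.exp (-x)) (Set.Ioi a) := by
      simpa using exp_neg_integrableOn_Ioi a (b := 1) one_pos
    rw [← ofReal_integral_eq_lintegral_ofReal hi
      (Filter.Eventually.of_forall fun x => (Real.exp_pos _).le), integral_exp_neg_Ioi]
  set Fp : ℝ × ℝ → ENNReal :=
    ({p : ℝ × ℝ | A p.1 < p.2}).indicator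
      (fun p => ENNReal.ofReal (α p.1) * ENNReal.ofReal (Real.exp (-p.2))) with hFp
  have hstep : ∀ t : ℝ, ENNReal.ofReal (α t * Real.exp (-A t)) = ∫⁻ x, Fp (t, x) := by
    intro t
    have h1 : ∀ x : ℝ, Fp (t, x)
        = ENNReal.ofReal (α t) * (Set.Ioi (A t)).indicator
            (fun x => ENNReal.ofReal (Real.exp (-x))) x := by
      intro x
      simp [hFp, Set.indicator_apply, Set.mem_Ioi, Set.mem_setOf_eq, mul_ite, mul_zero]
    simp_rw [h1]
    rw [lintegral_const_mul' _ _ ENNReal.ofReal_ne_top, lintegral_indicator measurableSet_Ioi _,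
      ← hexp, ← ENNReal.ofReal_mul (hnn t)]
  have hAae : AEMeasurable A (volume.restrict (Set.Icc (0:ℝ) T)) :=
    hAcont.aemeasurable measurableSet_Icc
  have hFm : AEMeasurable (Function.uncurry (fun t x => Fp (t, x)))
      (((volume : Measure ℝ).restrict (Set.Icc (0:ℝ) T)).prod volume) := by
    have hA1 : AEMeasurable (fun p : ℝ × ℝ => A p.1)
        (((volume : Measure ℝ).restrict (Set.Icc (0:ℝ) T)).prod volume) := hAae.comp_fst
    have hset : NullMeasurableSet {p : ℝ × ℝ | A p.1 < p.2}
        (((volume : Measure ℝ).restrict (Set.Icc (0:ℝ) T)).prod volume) :=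
      nullMeasurableSet_lt hA1 measurable_snd.aemeasurable
    exact AEMeasurable.indicator₀
      (((hm.comp measurable_fst).ennreal_ofReal.aemeasurable).mul
        ((measurable_snd.neg.exp.ennreal_ofReal).aemeasurable)) hset
  calc ∫⁻ t in Set.Icc 0 T, ENNReal.ofReal (α t * Real.exp (-A t))
      = ∫⁻ t in Set.Icc 0 T, ∫⁻ x, Fp (t, x) := by simp_rw [hstep]
    _ = ∫⁻ x, ∫⁻ t in Set.Icc 0 T, Fp (t, x) := lintegral_lintegral_swap hFm
    _ ≤ ∫⁻ x : ℝ, ENNReal.ofReal (Real.exp (-x)) * ENNReal.ofReal x := by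
        refine lintegral_mono fun x => ?_
        have h1 : ∀ t : ℝ, Fp (t, x) = ENNReal.ofReal (Real.exp (-x)) *
            (if A t < x then ENNReal.ofReal (α t) else 0) := by
          intro t
          simp [hFp, Set.indicator_apply, Set.mem_setOf_eq, mul_ite, mul_zero, mul_comm]
        simp_rw [h1]
        rw [lintegral_const_mul' _ _ ENNReal.ofReal_ne_top]
        refine mul_le_mul_right ?_ _
        -- key geometric bound
        rcases le_or_gt x 0 with hx | hx
        · have hz : ∀ t ∈ Set.Icc (0:ℝ) T,
              (if A t < x then ENNReal.ofReal (α t) else 0) = 0 := by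
            intro t ht
            rw [if_neg]
            exact not_lt.mpr (le_trans hx (hAnn t ht))
          rw [setLIntegral_congr_fun_ae measurableSet_Icc
            (Filter.Eventually.of_forall hz)]
          simp
        · set S : Set ℝ := {t | t ∈ Set.Icc (0:ℝ) T ∧ A t < x} with hS
          set τ : ℝ := sSup (insert 0 S) with hτ
          have hne : (insert (0:ℝ) S).Nonempty := ⟨0, Set.mem_insert _ _⟩
          have hbdd : BddAbove (insert (0:ℝ) S) := by
            refine ⟨T, ?_⟩
            rintro y (rfl | hy)
            · exact hT
            · exact hy.1.2
          have hτT : τ ≤ T := csSup_le hne (by rintro y (rfl | hy); exact hT; exact hy.1.2)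
          have hτ0 : 0 ≤ τ := le_csSup hbdd (Set.mem_insert _ _)
          have hbound : ∀ t ∈ Set.Icc (0:ℝ) T,
              (if A t < x then ENNReal.ofReal (α t) else 0)
                ≤ (Set.Icc 0 τ).indicator (fun t => ENNReal.ofReal (α t)) t := by
            intro t ht
            split_ifs with h
            · have htτ : t ≤ τ := le_csSup hbdd (Set.mem_insert_of_mem _ ⟨ht, h⟩)
              rw [Set.indicator_of_mem (Set.mem_Icc.mpr ⟨ht.1, htτ⟩)]
            · exact zero_le
          have hAτx : A τ ≤ x := by
            rcases eq_or_lt_of_le hτ0 with h0 | h0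
            · rw [← h0, hA0]; exact hx.le
            · have hlt : ∀ t ∈ Set.Ico (0:ℝ) τ, A t ≤ x := by
                intro t ht
                obtain ⟨s, hs, hts⟩ := exists_lt_of_lt_csSup hne ht.2
                rcases hs with rfl | hs
                · exact absurd hts (not_lt.mpr ht.1)
                · exact le_trans (hAmono t s ht.1 hts.le hs.1.2) hs.2.le
              have hcw : ContinuousWithinAt A (Set.Ico 0 τ) τ :=
                (hAcont τ (Set.mem_Icc.mpr ⟨hτ0, hτT⟩)).mono
                  (fun y hy => ⟨hy.1, le_trans hy.2.le hτT⟩)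
              have hnb : (nhdsWithin τ (Set.Ico (0:ℝ) τ)).NeBot := by
                rw [← mem_closure_iff_nhdsWithin_neBot, closure_Ico (ne_of_lt h0)]
                exact Set.mem_Icc.mpr ⟨hτ0, le_rfl⟩
              exact le_of_tendsto hcw
                (eventually_mem_nhdsWithin.mono fun t ht => hlt t ht)
          calc ∫⁻ t in Set.Icc 0 T, (if A t < x then ENNReal.ofReal (α t) else 0)
              ≤ ∫⁻ t in Set.Icc 0 T,
                  (Set.Icc 0 τ).indicator (fun t => ENNReal.ofReal (α t)) t :=
                setLIntegral_mono_ae' measurableSet_Icc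
                  (Filter.Eventually.of_forall hbound)
            _ ≤ ∫⁻ t, (Set.Icc 0 τ).indicator (fun t => ENNReal.ofReal (α t)) t :=
                setLIntegral_le_lintegral _ _
            _ = ∫⁻ t in Set.Icc 0 τ, ENNReal.ofReal (α t) :=
                lintegral_indicator measurableSet_Icc _
            _ = ENNReal.ofReal (∫ t in Set.Icc 0 τ, α t) :=
                (ofReal_integral_eq_lintegral_ofReal
                  (hint.mono_set (Set.Icc_subset_Icc le_rfl hτT))
                  (Filter.Eventually.of_forall fun t => hnn t)).symm
            _ = ENNReal.ofReal (A τ) := by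
                rw [hA, integral_Icc_eq_integral_Ioc, ← intervalIntegral.integral_of_le hτ0]
            _ ≤ ENNReal.ofReal x := ENNReal.ofReal_le_ofReal hAτx
    _ = ∫⁻ x : ℝ, ENNReal.ofReal (Real.exp (-x) * x) := by
        simp_rw [ENNReal.ofReal_mul (Real.exp_nonneg _)]
    _ = (∫⁻ x in Set.Iic (0:ℝ), ENNReal.ofReal (Real.exp (-x) * x)) +
        ∫⁻ x in Set.Ioi (0:ℝ), ENNReal.ofReal (Real.exp (-x) * x) := by
        rw [← lintegral_add_compl _ (measurableSet_Iic : MeasurableSet (Set.Iic (0:ℝ))),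
          Set.compl_Iic]
    _ ≤ 0 + 1 := by
        gcongr
        · have hz : ∀ x ∈ Set.Iic (0:ℝ), ENNReal.ofReal (Real.exp (-x) * x) = 0 := by
            intro x hx
            exact ENNReal.ofReal_eq_zero.mpr
              (mul_nonpos_iff.mpr (Or.inl ⟨(Real.exp_pos _).le, hx⟩))
          rw [setLIntegral_congr_fun_ae measurableSet_Iic (Filter.Eventually.of_forall hz)]
          simp
        · have h2 : (fun x : ℝ => Real.exp (-x) * x ^ ((2:ℝ) - 1)) =
              fun x : ℝ => Real.exp (-x) * x := by
            funext y; norm_num [Real.rpow_one]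
          have hi : IntegrableOn (fun x => Real.exp (-x) * x) (Set.Ioi (0:ℝ)) := by
            have := Real.GammaIntegral_convergent (s := 2) (by norm_num)
            rwa [h2] at this
          rw [← ofReal_integral_eq_lintegral_ofReal hi ?hnn]
          case hnn =>
            rw [EventuallyLE, ae_restrict_iff' measurableSet_Ioi]
            exact Filter.Eventually.of_forall fun x hx =>
              mul_nonneg (Real.exp_nonneg _) hx.le
          have hg : (∫ x in Set.Ioi (0:ℝ), Real.exp (-x) * x) = Real.Gamma 2 := by
            rw [Real.Gamma_eq_integral (by norm_num : (0:ℝ) < 2), h2]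

          rw [hg]
          have : Real.Gamma 2 = 1 := by
            have h := Real.Gamma_add_one (s := 1) one_ne_zero
            norm_num [Real.Gamma_one] at h
            norm_num [h]
          simp [this]
    _ = 1 := by simp


lemma sq3 (a b c : ENNReal) : (a + b + c) ^ 2 ≤ 3 * (a ^ 2 + b ^ 2 + c ^ 2) := by
  induction a using ENNReal.recTopCoe with
  | top =>
    rw [ENNReal.top_pow (by norm_num)]
    simp [ENNReal.mul_top]
  | coe a =>
    induction b using ENNReal.recTopCoe with
    | top =>
    rw [ENNReal.top_pow (by norm_num)]
    simp [ENNReal.mul_top]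
    | coe b =>
      induction c using ENNReal.recTopCoe with
      | top =>
    rw [ENNReal.top_pow (by norm_num)]
    simp [ENNReal.mul_top]
      | coe c =>
        have h : (a + b + c) ^ 2 ≤ 3 * (a ^ 2 + b ^ 2 + c ^ 2) := by
          rw [← NNReal.coe_le_coe]
          push_cast
          nlinarith [sq_nonneg ((a:ℝ) - b), sq_nonneg ((a:ℝ) - c), sq_nonneg ((b:ℝ) - c),
            a.coe_nonneg, b.coe_nonneg, c.coe_nonneg]
        exact_mod_cast h

lemma sq_lintegral_mul_le {μ : Measure ℝ} {u v : ℝ → ENNReal}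
    (hu : AEMeasurable u μ) (hv : AEMeasurable v μ) :
    (∫⁻ t, u t * v t ∂μ) ^ 2 ≤ (∫⁻ t, u t ^ 2 ∂μ) * (∫⁻ t, v t ^ 2 ∂μ) := by
  have hpq : Real.HolderConjugate 2 2 := Real.HolderConjugate.two_two
  have h := ENNReal.lintegral_mul_le_Lp_mul_Lq μ hpq hu hv
  simp only [Pi.mul_apply] at h
  have hrw : ∀ w : ℝ → ENNReal, (∫⁻ t, w t ^ (2:ℝ) ∂μ) = ∫⁻ t, w t ^ 2 ∂μ := by
    intro w
    refine lintegral_congr fun t => ?_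
    rw [show (2:ℝ) = ((2:ℕ):ℝ) by norm_num, ENNReal.rpow_natCast]
  rw [hrw, hrw] at h
  calc (∫⁻ t, u t * v t ∂μ) ^ 2
      ≤ ((∫⁻ t, u t ^ 2 ∂μ) ^ (1/(2:ℝ)) * (∫⁻ t, v t ^ 2 ∂μ) ^ (1/(2:ℝ))) ^ 2 := by
        exact pow_le_pow_left' h 2
    _ = (∫⁻ t, u t ^ 2 ∂μ) * (∫⁻ t, v t ^ 2 ∂μ) := by
        rw [mul_pow, ← ENNReal.rpow_natCast ((∫⁻ t, u t ^ 2 ∂μ) ^ (1/(2:ℝ))),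
          ← ENNReal.rpow_natCast ((∫⁻ t, v t ^ 2 ∂μ) ^ (1/(2:ℝ))),
          ← ENNReal.rpow_mul, ← ENNReal.rpow_mul]
        norm_num

lemma per_omega {T : ℝ} (hT : 0 ≤ T) {β₁ β₂ : ℝ} (hβ₁ : 0 < β₁) (hβ₂ : 0 < β₂)
    {c₁ c₂ a Φ Ψ F0 : ℝ → ℝ}
    (hc₁m : Measurable c₁) (hc₂m : Measurable c₂) (ham : Measurable a)
    (hΦm : Measurable Φ) (hΨm : Measurable Ψ) (hF0m : Measurable F0)
    (hc₁ : ∀ t, 0 ≤ c₁ t) (hc₂ : ∀ t, 0 ≤ c₂ t) (hapos : ∀ t, 0 < a t)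
    (hΦ : ∀ t, 0 ≤ Φ t) (hΨ : ∀ t, 0 ≤ Ψ t) (hF0 : ∀ t, 0 ≤ F0 t)
    (h1 : ∀ t, β₁ * c₁ t ≤ a t) (h2 : ∀ t, β₂ * c₂ t ^ 2 ≤ a t)
    (haint : IntegrableOn a (Set.Icc 0 T))
    {E : Type*} [NormedAddCommGroup E] [NormedSpace ℝ E] {g : ℝ → E}
    (hle : ∀ᵐ t ∂(volume.restrict (Set.Icc (0:ℝ) T)),
      ‖g t‖ ≤ c₁ t * Φ t + c₂ t * Ψ t + F0 t) :
    ENNReal.ofReal (‖∫ s in (0:ℝ)..T, g s‖ ^ 2) ≤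
      ENNReal.ofReal (3 / β₁ ^ 2) * (∫⁻ t in Set.Icc (0:ℝ) T,
        ENNReal.ofReal (Real.exp (∫ s in (0:ℝ)..t, a s) * a t * Φ t ^ 2)) +
      ENNReal.ofReal (3 / β₂) * (∫⁻ t in Set.Icc (0:ℝ) T,
        ENNReal.ofReal (Real.exp (∫ s in (0:ℝ)..t, a s) * Ψ t ^ 2)) +
      3 * (∫⁻ t in Set.Icc (0:ℝ) T,
        ENNReal.ofReal (Real.exp (∫ s in (0:ℝ)..t, a s) * F0 t ^ 2 / a t)) := by
  have hannn : ∀ t, 0 ≤ a t := fun t => (hapos t).le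
  set A : ℝ → ℝ := fun t => ∫ s in (0:ℝ)..t, a s with hA
  set P : ℝ → ℝ := fun t => Real.exp (A t) with hP
  have hPpos : ∀ t, 0 < P t := fun t => Real.exp_pos _
  have hkey : (∫⁻ t in Set.Icc (0:ℝ) T,
      ENNReal.ofReal (a t * Real.exp (-(A t)))) ≤ 1 :=
    key_exp_bound hT ham hannn haint
  have hexpneg : ∀ t, Real.exp (-(A t)) = (P t)⁻¹ := fun t => Real.exp_neg _
  -- a.e.-measurability on the restricted measure
  have hAcont : ContinuousOn A (Set.Icc 0 T) := by
    have := continuousOn_primitive_interval (a := 0) (b := T) (μ := volume) (f := a)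
      (by rwa [Set.uIcc_of_le hT])
    rwa [Set.uIcc_of_le hT] at this
  have hPae : AEMeasurable P (volume.restrict (Set.Icc (0:ℝ) T)) :=
    ((Real.continuous_exp.comp_continuousOn hAcont).aemeasurable measurableSet_Icc)
  set μr := volume.restrict (Set.Icc (0:ℝ) T) with hμr
  set L₁ : ENNReal := ∫⁻ t in Set.Icc (0:ℝ) T, ENNReal.ofReal (c₁ t * Φ t) with hL₁def
  set L₂ : ENNReal := ∫⁻ t in Set.Icc (0:ℝ) T, ENNReal.ofReal (c₂ t * Ψ t) with hL₂def
  set L₃ : ENNReal := ∫⁻ t in Set.Icc (0:ℝ) T, ENNReal.ofReal (F0 t) with hL₃def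
  set I₁ : ENNReal := ∫⁻ t in Set.Icc (0:ℝ) T, ENNReal.ofReal (P t * a t * Φ t ^ 2) with hI₁def
  set I₂ : ENNReal := ∫⁻ t in Set.Icc (0:ℝ) T, ENNReal.ofReal (P t * Ψ t ^ 2) with hI₂def
  set I₃ : ENNReal := ∫⁻ t in Set.Icc (0:ℝ) T, ENNReal.ofReal (P t * F0 t ^ 2 / a t) with hI₃def
  -- Step 2 : bound the squared norm of the interval integral
  have hstep2 : ENNReal.ofReal (‖∫ s in (0:ℝ)..T, g s‖ ^ 2) ≤
      (∫⁻ t in Set.Icc (0:ℝ) T, ENNReal.ofReal ‖g t‖) ^ 2 := by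
    by_cases hgi : IntervalIntegrable g volume 0 T
    · have h1' : ‖∫ s in (0:ℝ)..T, g s‖ ≤ ∫ s in (0:ℝ)..T, ‖g s‖ :=
        intervalIntegral.norm_integral_le_integral_norm hT
      have hnormint : IntegrableOn (fun s => ‖g s‖) (Set.Ioc (0:ℝ) T) :=
        (intervalIntegrable_iff_integrableOn_Ioc_of_le hT).mp hgi.norm
      have h2' : ENNReal.ofReal (∫ s in (0:ℝ)..T, ‖g s‖) ≤
          ∫⁻ t in Set.Icc (0:ℝ) T, ENNReal.ofReal ‖g t‖ := by
        rw [intervalIntegral.integral_of_le hT,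
          ofReal_integral_eq_lintegral_ofReal hnormint
            (Filter.Eventually.of_forall fun s => norm_nonneg _)]
        exact lintegral_mono_set Set.Ioc_subset_Icc_self
      calc ENNReal.ofReal (‖∫ s in (0:ℝ)..T, g s‖ ^ 2)
          = ENNReal.ofReal (‖∫ s in (0:ℝ)..T, g s‖) ^ 2 := by
            rw [ENNReal.ofReal_pow (norm_nonneg _)]
        _ ≤ (∫⁻ t in Set.Icc (0:ℝ) T, ENNReal.ofReal ‖g t‖) ^ 2 := by
            exact pow_le_pow_left' (le_trans (ENNReal.ofReal_le_ofReal h1') h2') 2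
    · rw [intervalIntegral.integral_undef hgi]
      simp
  -- Step 3 : split the norm
  have hstep3 : (∫⁻ t in Set.Icc (0:ℝ) T, ENNReal.ofReal ‖g t‖) ≤ L₁ + L₂ + L₃ := by
    have hmono : (∫⁻ t in Set.Icc (0:ℝ) T, ENNReal.ofReal ‖g t‖) ≤
        ∫⁻ t in Set.Icc (0:ℝ) T,
          (ENNReal.ofReal (c₁ t * Φ t) + ENNReal.ofReal (c₂ t * Ψ t)
            + ENNReal.ofReal (F0 t)) := by
      refine lintegral_mono_ae (hle.mono fun t ht => ?_)
      rw [← ENNReal.ofReal_add (mul_nonneg (hc₁ t) (hΦ t)) (mul_nonneg (hc₂ t) (hΨ t)),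
        ← ENNReal.ofReal_add (add_nonneg (mul_nonneg (hc₁ t) (hΦ t))
          (mul_nonneg (hc₂ t) (hΨ t))) (hF0 t)]
      exact ENNReal.ofReal_le_ofReal ht
    refine hmono.trans (le_of_eq ?_)
    rw [lintegral_add_right _ ((hF0m.ennreal_ofReal)),
      lintegral_add_right _ ((show Measurable (fun t => c₂ t * Ψ t) from hc₂m.mul hΨm).ennreal_ofReal)]
  -- Hölder estimates
  have hsa : AEMeasurable (fun t => Real.sqrt (a t * P t)) μr :=
    Real.continuous_sqrt.measurable.comp_aemeasurable (ham.aemeasurable.mul hPae)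
  have hsP : AEMeasurable (fun t => Real.sqrt (P t)) μr :=
    Real.continuous_sqrt.measurable.comp_aemeasurable hPae
  have hH1 : L₁ ^ 2 ≤ ENNReal.ofReal (1 / β₁ ^ 2) * I₁ := by
    have hspos : ∀ t, 0 < Real.sqrt (a t * P t) :=
      fun t => Real.sqrt_pos.mpr (mul_pos (hapos t) (hPpos t))
    have hL1eq : L₁ = ∫⁻ t, ENNReal.ofReal (c₁ t / Real.sqrt (a t * P t)) *
        ENNReal.ofReal (Real.sqrt (a t * P t) * Φ t) ∂μr := by
      refine lintegral_congr fun t => ?_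
      rw [← ENNReal.ofReal_mul (div_nonneg (hc₁ t) (Real.sqrt_nonneg _))]
      congr 1
      rw [div_mul_eq_mul_div, mul_comm (Real.sqrt (a t * P t)) (Φ t), ← mul_assoc,
        mul_div_assoc, div_self (hspos t).ne', mul_one]
    have hCS := sq_lintegral_mul_le (μ := μr)
      ((hc₁m.aemeasurable.div hsa).ennreal_ofReal)
      ((hsa.mul hΦm.aemeasurable).ennreal_ofReal)
    have hu2 : (∫⁻ t, ENNReal.ofReal (c₁ t / Real.sqrt (a t * P t)) ^ 2 ∂μr)
        ≤ ENNReal.ofReal (1 / β₁ ^ 2) := by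
      have hpt : ∀ t, ENNReal.ofReal (c₁ t / Real.sqrt (a t * P t)) ^ 2 ≤
          ENNReal.ofReal (1 / β₁ ^ 2 * (a t * Real.exp (-(A t)))) := by
        intro t
        rw [← ENNReal.ofReal_pow (div_nonneg (hc₁ t) (Real.sqrt_nonneg _))]
        refine ENNReal.ofReal_le_ofReal ?_
        rw [div_pow, Real.sq_sqrt (mul_nonneg (hannn t) (hPpos t).le), hexpneg t,
          show 1 / β₁ ^ 2 * (a t * (P t)⁻¹) = a t / (β₁ ^ 2 * P t) by
            field_simp,
          div_le_div_iff₀ (mul_pos (hapos t) (hPpos t)) (mul_pos (pow_pos hβ₁ 2) (hPpos t))]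
        have hsq : (β₁ * c₁ t) * (β₁ * c₁ t) ≤ a t * a t :=
          mul_self_le_mul_self (mul_nonneg hβ₁.le (hc₁ t)) (h1 t)
        nlinarith [(hPpos t).le, hsq]
      calc (∫⁻ t, ENNReal.ofReal (c₁ t / Real.sqrt (a t * P t)) ^ 2 ∂μr)
          ≤ ∫⁻ t, ENNReal.ofReal (1 / β₁ ^ 2 * (a t * Real.exp (-(A t)))) ∂μr :=
            lintegral_mono fun t => hpt t
        _ = ENNReal.ofReal (1 / β₁ ^ 2) *
              ∫⁻ t, ENNReal.ofReal (a t * Real.exp (-(A t))) ∂μr := by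
            simp_rw [ENNReal.ofReal_mul (by positivity : (0:ℝ) ≤ 1 / β₁ ^ 2)]
            rw [lintegral_const_mul' _ _ ENNReal.ofReal_ne_top]
        _ ≤ ENNReal.ofReal (1 / β₁ ^ 2) * 1 := mul_le_mul_right hkey _
        _ = ENNReal.ofReal (1 / β₁ ^ 2) := mul_one _
    have hv2 : (∫⁻ t, ENNReal.ofReal (Real.sqrt (a t * P t) * Φ t) ^ 2 ∂μr) = I₁ := by
      refine lintegral_congr fun t => ?_
      rw [← ENNReal.ofReal_pow (mul_nonneg (Real.sqrt_nonneg _) (hΦ t))]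
      congr 1
      rw [mul_pow, Real.sq_sqrt (mul_nonneg (hannn t) (hPpos t).le)]
      ring
    calc L₁ ^ 2 = (∫⁻ t, ENNReal.ofReal (c₁ t / Real.sqrt (a t * P t)) *
          ENNReal.ofReal (Real.sqrt (a t * P t) * Φ t) ∂μr) ^ 2 := by rw [hL1eq]
      _ ≤ (∫⁻ t, ENNReal.ofReal (c₁ t / Real.sqrt (a t * P t)) ^ 2 ∂μr) *
          (∫⁻ t, ENNReal.ofReal (Real.sqrt (a t * P t) * Φ t) ^ 2 ∂μr) := hCS
      _ ≤ ENNReal.ofReal (1 / β₁ ^ 2) * I₁ := by rw [hv2]; exact mul_le_mul_left hu2 _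
  have hH2 : L₂ ^ 2 ≤ ENNReal.ofReal (1 / β₂) * I₂ := by
    have hspos : ∀ t, 0 < Real.sqrt (P t) := fun t => Real.sqrt_pos.mpr (hPpos t)
    have hL2eq : L₂ = ∫⁻ t, ENNReal.ofReal (c₂ t / Real.sqrt (P t)) *
        ENNReal.ofReal (Real.sqrt (P t) * Ψ t) ∂μr := by
      refine lintegral_congr fun t => ?_
      rw [← ENNReal.ofReal_mul (div_nonneg (hc₂ t) (Real.sqrt_nonneg _))]
      congr 1
      rw [div_mul_eq_mul_div, mul_comm (Real.sqrt (P t)) (Ψ t), ← mul_assoc,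
        mul_div_assoc, div_self (hspos t).ne', mul_one]
    have hCS := sq_lintegral_mul_le (μ := μr)
      ((hc₂m.aemeasurable.div hsP).ennreal_ofReal)
      ((hsP.mul hΨm.aemeasurable).ennreal_ofReal)
    have hu2 : (∫⁻ t, ENNReal.ofReal (c₂ t / Real.sqrt (P t)) ^ 2 ∂μr)
        ≤ ENNReal.ofReal (1 / β₂) := by
      have hpt : ∀ t, ENNReal.ofReal (c₂ t / Real.sqrt (P t)) ^ 2 ≤
          ENNReal.ofReal (1 / β₂ * (a t * Real.exp (-(A t)))) := by
        intro t
        rw [← ENNReal.ofReal_pow (div_nonneg (hc₂ t) (Real.sqrt_nonneg _))]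
        refine ENNReal.ofReal_le_ofReal ?_
        rw [div_pow, Real.sq_sqrt (hPpos t).le, hexpneg t,
          show 1 / β₂ * (a t * (P t)⁻¹) = a t / (β₂ * P t) by field_simp,
          div_le_div_iff₀ (hPpos t) (mul_pos hβ₂ (hPpos t))]
        nlinarith [(hPpos t).le, h2 t]
      calc (∫⁻ t, ENNReal.ofReal (c₂ t / Real.sqrt (P t)) ^ 2 ∂μr)
          ≤ ∫⁻ t, ENNReal.ofReal (1 / β₂ * (a t * Real.exp (-(A t)))) ∂μr :=
            lintegral_mono fun t => hpt t
        _ = ENNReal.ofReal (1 / β₂) *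
              ∫⁻ t, ENNReal.ofReal (a t * Real.exp (-(A t))) ∂μr := by
            simp_rw [ENNReal.ofReal_mul (by positivity : (0:ℝ) ≤ 1 / β₂)]
            rw [lintegral_const_mul' _ _ ENNReal.ofReal_ne_top]
        _ ≤ ENNReal.ofReal (1 / β₂) * 1 := mul_le_mul_right hkey _
        _ = ENNReal.ofReal (1 / β₂) := mul_one _
    have hv2 : (∫⁻ t, ENNReal.ofReal (Real.sqrt (P t) * Ψ t) ^ 2 ∂μr) = I₂ := by
      refine lintegral_congr fun t => ?_
      rw [← ENNReal.ofReal_pow (mul_nonneg (Real.sqrt_nonneg _) (hΨ t))]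
      congr 1
      rw [mul_pow, Real.sq_sqrt (hPpos t).le]
    calc L₂ ^ 2 = (∫⁻ t, ENNReal.ofReal (c₂ t / Real.sqrt (P t)) *
          ENNReal.ofReal (Real.sqrt (P t) * Ψ t) ∂μr) ^ 2 := by rw [hL2eq]
      _ ≤ (∫⁻ t, ENNReal.ofReal (c₂ t / Real.sqrt (P t)) ^ 2 ∂μr) *
          (∫⁻ t, ENNReal.ofReal (Real.sqrt (P t) * Ψ t) ^ 2 ∂μr) := hCS
      _ ≤ ENNReal.ofReal (1 / β₂) * I₂ := by rw [hv2]; exact mul_le_mul_left hu2 _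
  have hH3 : L₃ ^ 2 ≤ I₃ := by
    have hone : ∀ t, Real.sqrt (a t * Real.exp (-(A t))) * Real.sqrt (P t / a t) = 1 := by
      intro t
      rw [← Real.sqrt_mul (mul_nonneg (hannn t) (Real.exp_nonneg _))]
      rw [show a t * Real.exp (-(A t)) * (P t / a t) = 1 by
        rw [hexpneg t]; field_simp; rw [div_self (mul_pos (hapos t) (hPpos t)).ne']]
      exact Real.sqrt_one
    have hL3eq : L₃ = ∫⁻ t, ENNReal.ofReal (Real.sqrt (a t * Real.exp (-(A t)))) *
        ENNReal.ofReal (Real.sqrt (P t / a t) * F0 t) ∂μr := by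
      refine lintegral_congr fun t => ?_
      rw [← ENNReal.ofReal_mul (Real.sqrt_nonneg _)]
      congr 1
      rw [← mul_assoc, hone t, one_mul]
    have hexpae : AEMeasurable (fun t => Real.exp (-(A t))) μr := by
      have : AEMeasurable A μr := hAcont.aemeasurable measurableSet_Icc
      exact Real.continuous_exp.measurable.comp_aemeasurable this.neg
    have hCS := sq_lintegral_mul_le (μ := μr)
      ((Real.continuous_sqrt.measurable.comp_aemeasurable
        (ham.aemeasurable.mul hexpae)).ennreal_ofReal)
      (((Real.continuous_sqrt.measurable.comp_aemeasurable
        (hPae.div ham.aemeasurable)).mul hF0m.aemeasurable).ennreal_ofReal)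
    have hu2 : (∫⁻ t, ENNReal.ofReal (Real.sqrt (a t * Real.exp (-(A t)))) ^ 2 ∂μr) ≤ 1 := by
      refine le_trans (le_of_eq (lintegral_congr fun t => ?_)) hkey
      rw [← ENNReal.ofReal_pow (Real.sqrt_nonneg _),
        Real.sq_sqrt (mul_nonneg (hannn t) (Real.exp_nonneg _))]
    have hv2 : (∫⁻ t, ENNReal.ofReal (Real.sqrt (P t / a t) * F0 t) ^ 2 ∂μr) = I₃ := by
      refine lintegral_congr fun t => ?_
      rw [← ENNReal.ofReal_pow (mul_nonneg (Real.sqrt_nonneg _) (hF0 t))]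
      congr 1
      rw [mul_pow, Real.sq_sqrt (div_nonneg (hPpos t).le (hannn t))]
      field_simp
    calc L₃ ^ 2 = (∫⁻ t, ENNReal.ofReal (Real.sqrt (a t * Real.exp (-(A t)))) *
          ENNReal.ofReal (Real.sqrt (P t / a t) * F0 t) ∂μr) ^ 2 := by rw [hL3eq]
      _ ≤ (∫⁻ t, ENNReal.ofReal (Real.sqrt (a t * Real.exp (-(A t)))) ^ 2 ∂μr) *
          (∫⁻ t, ENNReal.ofReal (Real.sqrt (P t / a t) * F0 t) ^ 2 ∂μr) := hCS
      _ ≤ 1 * I₃ := by rw [hv2]; exact mul_le_mul_left hu2 _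
      _ = I₃ := one_mul _
  -- combine
  have e1 : (3:ENNReal) * (ENNReal.ofReal (1 / β₁ ^ 2) * I₁) =
      ENNReal.ofReal (3 / β₁ ^ 2) * I₁ := by
    rw [← mul_assoc, ← ENNReal.ofReal_ofNat, ← ENNReal.ofReal_mul (by norm_num)]
    norm_num [div_eq_mul_inv]
  have e2 : (3:ENNReal) * (ENNReal.ofReal (1 / β₂) * I₂) =
      ENNReal.ofReal (3 / β₂) * I₂ := by
    rw [← mul_assoc, ← ENNReal.ofReal_ofNat, ← ENNReal.ofReal_mul (by norm_num)]
    norm_num [div_eq_mul_inv]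
  calc ENNReal.ofReal (‖∫ s in (0:ℝ)..T, g s‖ ^ 2)
      ≤ (∫⁻ t in Set.Icc (0:ℝ) T, ENNReal.ofReal ‖g t‖) ^ 2 := hstep2
    _ ≤ (L₁ + L₂ + L₃) ^ 2 := pow_le_pow_left' hstep3 2
    _ ≤ 3 * (L₁ ^ 2 + L₂ ^ 2 + L₃ ^ 2) := sq3 _ _ _
    _ ≤ 3 * ((ENNReal.ofReal (1 / β₁ ^ 2) * I₁) + (ENNReal.ofReal (1 / β₂) * I₂) + I₃) := by
        refine mul_le_mul_right ?_ _
        exact add_le_add (add_le_add hH1 hH2) hH3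
    _ = ENNReal.ofReal (3 / β₁ ^ 2) * I₁ + ENNReal.ofReal (3 / β₂) * I₂ + 3 * I₃ := by
        rw [mul_add, mul_add, e1, e2]

/-- the a-priori estimate of Lemma 3.2(i) under conditions A2:
E|∫₀ᵀ f(s,φ,ψ) ds|² ≤ (3/β̄₁²) E∫₀ᵀ p₂α₂|φ|² + (3/β̄₂) E∫₀ᵀ p₂|ψ|²
+ 3 E∫₀ᵀ p₂|f(·,0,0)|²/α₂, and in particular the left-hand side is finite. -/
theorem stmt_5 {Ω : Type*} [MeasureSpace Ω] [IsProbabilityMeasure (ℙ : Measure Ω)]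
    (T : ℝ) (hT : 0 < T) (d k : ℕ)
    (β₁ β₂ : ℝ) (hβ₁ : 4 < β₁) (hβ₂ : 90 * β₁ ^ 2 / (β₁ ^ 2 - 16) < β₂)
    (c₁ c₂ γ : Ω → ℝ → ℝ)
    (hc₁m : Measurable (Function.uncurry c₁))
    (hc₂m : Measurable (Function.uncurry c₂))
    (hγm : Measurable (Function.uncurry γ))
    (hc₁ : ∀ ω t, 0 ≤ c₁ ω t) (hc₂ : ∀ ω t, 0 ≤ c₂ ω t) (hγ : ∀ ω t, 0 < γ ω t)
    (α₂ p₂ : Ω → ℝ → ℝ)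
    (hα₂ : α₂ = fun ω t => γ ω t + β₁ * c₁ ω t + β₂ * c₂ ω t ^ 2)
    (hp₂ : p₂ = fun ω t => Real.exp (∫ s in (0 : ℝ)..t, α₂ ω s))
    (hα₂int : ∀ᵐ ω ∂ℙ, IntegrableOn (α₂ ω) (Set.Icc 0 T))
    (f : Ω → ℝ → EuclideanSpace ℝ (Fin d) → EuclideanSpace ℝ (Fin d × Fin k) →
      EuclideanSpace ℝ (Fin d))
    (hfm : Measurable (fun q : Ω × ℝ × EuclideanSpace ℝ (Fin d) ×
      EuclideanSpace ℝ (Fin d × Fin k) => f q.1 q.2.1 q.2.2.1 q.2.2.2))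
    (hLip : ∀ᵐ q ∂((ℙ : Measure Ω).prod (volume.restrict (Set.Icc (0 : ℝ) T))),
      ∀ y₁ y₂ : EuclideanSpace ℝ (Fin d), ∀ z₁ z₂ : EuclideanSpace ℝ (Fin d × Fin k),
        ‖f q.1 q.2 y₁ z₁ - f q.1 q.2 y₂ z₂‖ ≤
          c₁ q.1 q.2 * ‖y₁ - y₂‖ + c₂ q.1 q.2 * ‖z₁ - z₂‖)
    (φ : Ω → ℝ → EuclideanSpace ℝ (Fin d))
    (ψ : Ω → ℝ → EuclideanSpace ℝ (Fin d × Fin k))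
    (hφm : Measurable (Function.uncurry φ)) (hψm : Measurable (Function.uncurry ψ))
    (hφint : (∫⁻ ω, ∫⁻ t in Set.Icc (0 : ℝ) T,
      ENNReal.ofReal (p₂ ω t * α₂ ω t * ‖φ ω t‖ ^ 2) ∂volume ∂ℙ) < ⊤)
    (hψint : (∫⁻ ω, ∫⁻ t in Set.Icc (0 : ℝ) T,
      ENNReal.ofReal (p₂ ω t * ‖ψ ω t‖ ^ 2) ∂volume ∂ℙ) < ⊤)
    (hfint : (∫⁻ ω, ∫⁻ t in Set.Icc (0 : ℝ) T,
      ENNReal.ofReal (p₂ ω t * ‖f ω t 0 0‖ ^ 2 / α₂ ω t) ∂volume ∂ℙ) < ⊤) :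
    (∫⁻ ω, ENNReal.ofReal (‖∫ s in (0 : ℝ)..T, f ω s (φ ω s) (ψ ω s)‖ ^ 2) ∂ℙ) ≤
        ENNReal.ofReal (3 / β₁ ^ 2) * (∫⁻ ω, ∫⁻ t in Set.Icc (0 : ℝ) T,
          ENNReal.ofReal (p₂ ω t * α₂ ω t * ‖φ ω t‖ ^ 2) ∂volume ∂ℙ) +
        ENNReal.ofReal (3 / β₂) * (∫⁻ ω, ∫⁻ t in Set.Icc (0 : ℝ) T,
          ENNReal.ofReal (p₂ ω t * ‖ψ ω t‖ ^ 2) ∂volume ∂ℙ) +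
        3 * (∫⁻ ω, ∫⁻ t in Set.Icc (0 : ℝ) T,
          ENNReal.ofReal (p₂ ω t * ‖f ω t 0 0‖ ^ 2 / α₂ ω t) ∂volume ∂ℙ) ∧
    (∫⁻ ω, ENNReal.ofReal (‖∫ s in (0 : ℝ)..T, f ω s (φ ω s) (ψ ω s)‖ ^ 2) ∂ℙ) < ⊤ := by
  have hT0 : (0:ℝ) ≤ T := hT.le
  have hβ₁0 : (0:ℝ) < β₁ := by linarith
  have h16 : (0:ℝ) < β₁ ^ 2 - 16 := by nlinarith
  have hnum : (0:ℝ) < 90 * β₁ ^ 2 := by nlinarith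
  have hβ₂0 : (0:ℝ) < β₂ := lt_trans (div_pos hnum h16) hβ₂
  have hα₂pos : ∀ ω t, 0 < α₂ ω t := by
    intro ω t
    simp only [hα₂]
    nlinarith [hγ ω t, mul_nonneg hβ₁0.le (hc₁ ω t), mul_nonneg hβ₂0.le (sq_nonneg (c₂ ω t))]
  have h1 : ∀ ω t, β₁ * c₁ ω t ≤ α₂ ω t := by
    intro ω t
    simp only [hα₂]
    nlinarith [hγ ω t, mul_nonneg hβ₂0.le (sq_nonneg (c₂ ω t))]
  have h2 : ∀ ω t, β₂ * c₂ ω t ^ 2 ≤ α₂ ω t := by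
    intro ω t
    simp only [hα₂]
    nlinarith [hγ ω t, mul_nonneg hβ₁0.le (hc₁ ω t)]
  have hα₂m : Measurable (fun q : Ω × ℝ => α₂ q.1 q.2) := by
    simp only [hα₂]
    exact (hγm.add (hc₁m.const_mul β₁)).add ((hc₂m.pow_const 2).const_mul β₂)
  have hf0m' : Measurable (fun q : Ω × ℝ => f q.1 q.2 0 0) := by
    have hpm : Measurable (fun q : Ω × ℝ => (q.1, q.2, (0 : EuclideanSpace ℝ (Fin d)),
        (0 : EuclideanSpace ℝ (Fin d × Fin k)))) :=
      measurable_fst.prodMk (measurable_snd.prodMk (measurable_const.prodMk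
        measurable_const))
    exact hfm.comp hpm
  have hsec : ∀ ω, Measurable (α₂ ω) := fun ω => hα₂m.comp measurable_prodMk_left
  have hc₁sec : ∀ ω, Measurable (c₁ ω) := fun ω => hc₁m.comp measurable_prodMk_left
  have hc₂sec : ∀ ω, Measurable (c₂ ω) := fun ω => hc₂m.comp measurable_prodMk_left
  have hΦsec : ∀ ω, Measurable (fun t => ‖φ ω t‖) :=
    fun ω => (hφm.comp measurable_prodMk_left).norm
  have hΨsec : ∀ ω, Measurable (fun t => ‖ψ ω t‖) :=
    fun ω => (hψm.comp measurable_prodMk_left).norm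
  have hF0sec : ∀ ω, Measurable (fun t => ‖f ω t 0 0‖) :=
    fun ω => (hf0m'.comp measurable_prodMk_left).norm
  -- the pointwise (in ω) estimate
  have hae : ∀ᵐ ω ∂(ℙ : Measure Ω),
      ENNReal.ofReal (‖∫ s in (0 : ℝ)..T, f ω s (φ ω s) (ψ ω s)‖ ^ 2) ≤
      ENNReal.ofReal (3 / β₁ ^ 2) * (∫⁻ t in Set.Icc (0:ℝ) T,
        ENNReal.ofReal (p₂ ω t * α₂ ω t * ‖φ ω t‖ ^ 2)) +
      ENNReal.ofReal (3 / β₂) * (∫⁻ t in Set.Icc (0:ℝ) T,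
        ENNReal.ofReal (p₂ ω t * ‖ψ ω t‖ ^ 2)) +
      3 * (∫⁻ t in Set.Icc (0:ℝ) T,
        ENNReal.ofReal (p₂ ω t * ‖f ω t 0 0‖ ^ 2 / α₂ ω t)) := by
    filter_upwards [hα₂int, MeasureTheory.Measure.ae_ae_of_ae_prod hLip] with ω hint hlip
    have hle : ∀ᵐ t ∂(volume.restrict (Set.Icc (0:ℝ) T)),
        ‖f ω t (φ ω t) (ψ ω t)‖ ≤ c₁ ω t * ‖φ ω t‖ + c₂ ω t * ‖ψ ω t‖ + ‖f ω t 0 0‖ := by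
      filter_upwards [hlip] with t hlt
      have h := hlt (φ ω t) 0 (ψ ω t) 0
      rw [sub_zero, sub_zero] at h
      calc ‖f ω t (φ ω t) (ψ ω t)‖
          = ‖(f ω t (φ ω t) (ψ ω t) - f ω t 0 0) + f ω t 0 0‖ := by rw [sub_add_cancel]
        _ ≤ ‖f ω t (φ ω t) (ψ ω t) - f ω t 0 0‖ + ‖f ω t 0 0‖ := norm_add_le _ _
        _ ≤ c₁ ω t * ‖φ ω t‖ + c₂ ω t * ‖ψ ω t‖ + ‖f ω t 0 0‖ := by linarith
    have H := per_omega hT0 hβ₁0 hβ₂0 (hc₁sec ω) (hc₂sec ω) (hsec ω)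
      (hΦsec ω) (hΨsec ω) (hF0sec ω)
      (fun t => hc₁ ω t) (fun t => hc₂ ω t) (fun t => hα₂pos ω t)
      (fun t => norm_nonneg _) (fun t => norm_nonneg _) (fun t => norm_nonneg _)
      (fun t => h1 ω t) (fun t => h2 ω t) hint hle
    simpa only [hp₂] using H
  -- joint measurability of the inner integrals
  have hBm : Measurable (fun q : Ω × ℝ => ∫ s, (Set.Ioc (0:ℝ) q.2).indicator (α₂ q.1) s) := by
    have hset : MeasurableSet {r : (Ω × ℝ) × ℝ | 0 < r.2 ∧ r.2 ≤ r.1.2} :=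
      (measurableSet_lt measurable_const measurable_snd).inter
        (measurableSet_le measurable_snd (measurable_fst.snd))
    have hfun : Measurable (fun r : (Ω × ℝ) × ℝ => α₂ r.1.1 r.2) :=
      hα₂m.comp ((measurable_fst.fst).prodMk measurable_snd)
    have hGm : Measurable (fun r : (Ω × ℝ) × ℝ =>
        (Set.Ioc (0:ℝ) r.1.2).indicator (α₂ r.1.1) r.2) := by
      have heq : (fun r : (Ω × ℝ) × ℝ => (Set.Ioc (0:ℝ) r.1.2).indicator (α₂ r.1.1) r.2)
          = fun r => if 0 < r.2 ∧ r.2 ≤ r.1.2 then α₂ r.1.1 r.2 else 0 := by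
        funext r
        rw [Set.indicator_apply]
        simp [Set.mem_Ioc]
      rw [heq]
      exact Measurable.ite hset hfun measurable_const
    exact (hGm.stronglyMeasurable.integral_prod_right').measurable
  have hp₂eq : ∀ ω, ∀ t ∈ Set.Icc (0:ℝ) T,
      p₂ ω t = Real.exp (∫ s, (Set.Ioc (0:ℝ) t).indicator (α₂ ω) s) := by
    intro ω t ht
    simp only [hp₂]
    congr 1
    rw [intervalIntegral.integral_of_le ht.1, ← MeasureTheory.integral_indicator measurableSet_Ioc]
  have hJ₁m : Measurable (fun ω => ∫⁻ t in Set.Icc (0:ℝ) T, ENNReal.ofReal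
      (Real.exp (∫ s, (Set.Ioc (0:ℝ) t).indicator (α₂ ω) s) * α₂ ω t * ‖φ ω t‖ ^ 2)) := by
    exact Measurable.lintegral_prod_right' (ν := volume.restrict (Set.Icc (0:ℝ) T))
      (f := fun q : Ω × ℝ => ENNReal.ofReal
        (Real.exp (∫ s, (Set.Ioc (0:ℝ) q.2).indicator (α₂ q.1) s) * α₂ q.1 q.2 *
          ‖φ q.1 q.2‖ ^ 2))
      (((hBm.exp.mul hα₂m).mul ((hφm.norm).pow_const 2)).ennreal_ofReal)
  have hJ₂m : Measurable (fun ω => ∫⁻ t in Set.Icc (0:ℝ) T, ENNReal.ofReal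
      (Real.exp (∫ s, (Set.Ioc (0:ℝ) t).indicator (α₂ ω) s) * ‖ψ ω t‖ ^ 2)) := by
    exact Measurable.lintegral_prod_right' (ν := volume.restrict (Set.Icc (0:ℝ) T))
      (f := fun q : Ω × ℝ => ENNReal.ofReal
        (Real.exp (∫ s, (Set.Ioc (0:ℝ) q.2).indicator (α₂ q.1) s) * ‖ψ q.1 q.2‖ ^ 2))
      ((hBm.exp.mul ((hψm.norm).pow_const 2)).ennreal_ofReal)
  have hJ₃m : Measurable (fun ω => ∫⁻ t in Set.Icc (0:ℝ) T, ENNReal.ofReal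
      (Real.exp (∫ s, (Set.Ioc (0:ℝ) t).indicator (α₂ ω) s) * ‖f ω t 0 0‖ ^ 2 / α₂ ω t)) := by
    exact Measurable.lintegral_prod_right' (ν := volume.restrict (Set.Icc (0:ℝ) T))
      (f := fun q : Ω × ℝ => ENNReal.ofReal
        (Real.exp (∫ s, (Set.Ioc (0:ℝ) q.2).indicator (α₂ q.1) s) * ‖f q.1 q.2 0 0‖ ^ 2 /
          α₂ q.1 q.2))
      (((hBm.exp.mul ((hf0m'.norm).pow_const 2)).div hα₂m).ennreal_ofReal)
  have hJ₁eq : ∀ ω, (∫⁻ t in Set.Icc (0:ℝ) T,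
      ENNReal.ofReal (p₂ ω t * α₂ ω t * ‖φ ω t‖ ^ 2)) =
      ∫⁻ t in Set.Icc (0:ℝ) T, ENNReal.ofReal
        (Real.exp (∫ s, (Set.Ioc (0:ℝ) t).indicator (α₂ ω) s) * α₂ ω t * ‖φ ω t‖ ^ 2) := by
    intro ω
    refine setLIntegral_congr_fun_ae measurableSet_Icc
      (Filter.Eventually.of_forall fun t ht => ?_)
    rw [hp₂eq ω t ht]
  have hJ₂eq : ∀ ω, (∫⁻ t in Set.Icc (0:ℝ) T,
      ENNReal.ofReal (p₂ ω t * ‖ψ ω t‖ ^ 2)) =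
      ∫⁻ t in Set.Icc (0:ℝ) T, ENNReal.ofReal
        (Real.exp (∫ s, (Set.Ioc (0:ℝ) t).indicator (α₂ ω) s) * ‖ψ ω t‖ ^ 2) := by
    intro ω
    refine setLIntegral_congr_fun_ae measurableSet_Icc
      (Filter.Eventually.of_forall fun t ht => ?_)
    rw [hp₂eq ω t ht]
  have hJ₃eq : ∀ ω, (∫⁻ t in Set.Icc (0:ℝ) T,
      ENNReal.ofReal (p₂ ω t * ‖f ω t 0 0‖ ^ 2 / α₂ ω t)) =
      ∫⁻ t in Set.Icc (0:ℝ) T, ENNReal.ofReal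
        (Real.exp (∫ s, (Set.Ioc (0:ℝ) t).indicator (α₂ ω) s) * ‖f ω t 0 0‖ ^ 2 / α₂ ω t) := by
    intro ω
    refine setLIntegral_congr_fun_ae measurableSet_Icc
      (Filter.Eventually.of_forall fun t ht => ?_)
    rw [hp₂eq ω t ht]
  have key : (∫⁻ ω, ENNReal.ofReal (‖∫ s in (0 : ℝ)..T, f ω s (φ ω s) (ψ ω s)‖ ^ 2) ∂ℙ) ≤
      ENNReal.ofReal (3 / β₁ ^ 2) * (∫⁻ ω, ∫⁻ t in Set.Icc (0 : ℝ) T,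
        ENNReal.ofReal (p₂ ω t * α₂ ω t * ‖φ ω t‖ ^ 2) ∂volume ∂ℙ) +
      ENNReal.ofReal (3 / β₂) * (∫⁻ ω, ∫⁻ t in Set.Icc (0 : ℝ) T,
        ENNReal.ofReal (p₂ ω t * ‖ψ ω t‖ ^ 2) ∂volume ∂ℙ) +
      3 * (∫⁻ ω, ∫⁻ t in Set.Icc (0 : ℝ) T,
        ENNReal.ofReal (p₂ ω t * ‖f ω t 0 0‖ ^ 2 / α₂ ω t) ∂volume ∂ℙ) := by
    refine le_trans (lintegral_mono_ae hae) (le_of_eq ?_)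
    calc (∫⁻ ω, (ENNReal.ofReal (3 / β₁ ^ 2) * (∫⁻ t in Set.Icc (0:ℝ) T,
        ENNReal.ofReal (p₂ ω t * α₂ ω t * ‖φ ω t‖ ^ 2)) +
        ENNReal.ofReal (3 / β₂) * (∫⁻ t in Set.Icc (0:ℝ) T,
        ENNReal.ofReal (p₂ ω t * ‖ψ ω t‖ ^ 2)) +
        3 * (∫⁻ t in Set.Icc (0:ℝ) T,
        ENNReal.ofReal (p₂ ω t * ‖f ω t 0 0‖ ^ 2 / α₂ ω t))) ∂ℙ)
        = ∫⁻ ω, (ENNReal.ofReal (3 / β₁ ^ 2) * (∫⁻ t in Set.Icc (0:ℝ) T, ENNReal.ofReal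
            (Real.exp (∫ s, (Set.Ioc (0:ℝ) t).indicator (α₂ ω) s) * α₂ ω t * ‖φ ω t‖ ^ 2)) +
          ENNReal.ofReal (3 / β₂) * (∫⁻ t in Set.Icc (0:ℝ) T, ENNReal.ofReal
            (Real.exp (∫ s, (Set.Ioc (0:ℝ) t).indicator (α₂ ω) s) * ‖ψ ω t‖ ^ 2)) +
          3 * (∫⁻ t in Set.Icc (0:ℝ) T, ENNReal.ofReal
            (Real.exp (∫ s, (Set.Ioc (0:ℝ) t).indicator (α₂ ω) s) * ‖f ω t 0 0‖ ^ 2 / α₂ ω t))) ∂ℙ := by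
          refine lintegral_congr fun ω => ?_
          rw [hJ₁eq ω, hJ₂eq ω, hJ₃eq ω]
      _ = ENNReal.ofReal (3 / β₁ ^ 2) * (∫⁻ ω, ∫⁻ t in Set.Icc (0:ℝ) T, ENNReal.ofReal
            (Real.exp (∫ s, (Set.Ioc (0:ℝ) t).indicator (α₂ ω) s) * α₂ ω t * ‖φ ω t‖ ^ 2) ∂ℙ) +
          ENNReal.ofReal (3 / β₂) * (∫⁻ ω, ∫⁻ t in Set.Icc (0:ℝ) T, ENNReal.ofReal
            (Real.exp (∫ s, (Set.Ioc (0:ℝ) t).indicator (α₂ ω) s) * ‖ψ ω t‖ ^ 2) ∂ℙ) +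
          3 * (∫⁻ ω, ∫⁻ t in Set.Icc (0:ℝ) T, ENNReal.ofReal
            (Real.exp (∫ s, (Set.Ioc (0:ℝ) t).indicator (α₂ ω) s) * ‖f ω t 0 0‖ ^ 2 / α₂ ω t) ∂ℙ) := by
          rw [lintegral_add_right _ (hJ₃m.const_mul 3),
            lintegral_add_right _ (hJ₂m.const_mul _),
            lintegral_const_mul _ hJ₁m, lintegral_const_mul _ hJ₂m,
            lintegral_const_mul _ hJ₃m]
      _ = ENNReal.ofReal (3 / β₁ ^ 2) * (∫⁻ ω, ∫⁻ t in Set.Icc (0 : ℝ) T,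
            ENNReal.ofReal (p₂ ω t * α₂ ω t * ‖φ ω t‖ ^ 2) ∂volume ∂ℙ) +
          ENNReal.ofReal (3 / β₂) * (∫⁻ ω, ∫⁻ t in Set.Icc (0 : ℝ) T,
            ENNReal.ofReal (p₂ ω t * ‖ψ ω t‖ ^ 2) ∂volume ∂ℙ) +
          3 * (∫⁻ ω, ∫⁻ t in Set.Icc (0 : ℝ) T,
            ENNReal.ofReal (p₂ ω t * ‖f ω t 0 0‖ ^ 2 / α₂ ω t) ∂volume ∂ℙ) := by
          rw [lintegral_congr fun ω => (hJ₁eq ω).symm,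
            lintegral_congr fun ω => (hJ₂eq ω).symm,
            lintegral_congr fun ω => (hJ₃eq ω).symm]
  refine ⟨key, lt_of_le_of_lt key ?_⟩
  have hfin1 : ENNReal.ofReal (3 / β₁ ^ 2) * (∫⁻ ω, ∫⁻ t in Set.Icc (0 : ℝ) T,
      ENNReal.ofReal (p₂ ω t * α₂ ω t * ‖φ ω t‖ ^ 2) ∂volume ∂ℙ) < ⊤ :=
    ENNReal.mul_lt_top ENNReal.ofReal_lt_top hφint
  have hfin2 : ENNReal.ofReal (3 / β₂) * (∫⁻ ω, ∫⁻ t in Set.Icc (0 : ℝ) T,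
      ENNReal.ofReal (p₂ ω t * ‖ψ ω t‖ ^ 2) ∂volume ∂ℙ) < ⊤ :=
    ENNReal.mul_lt_top ENNReal.ofReal_lt_top hψint
  have hfin3 : (3:ENNReal) * (∫⁻ ω, ∫⁻ t in Set.Icc (0 : ℝ) T,
      ENNReal.ofReal (p₂ ω t * ‖f ω t 0 0‖ ^ 2 / α₂ ω t) ∂volume ∂ℙ) < ⊤ :=
    ENNReal.mul_lt_top (by norm_num) hfint
  exact ENNReal.add_lt_top.mpr ⟨ENNReal.add_lt_top.mpr ⟨hfin1, hfin2⟩, hfin3⟩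
end
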